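/- arXiv:1602.08999 — 3 statements merged into one kernel-verified Lean document; each statement's English description precedes it below -/
import Mathlib

section
/- For all n ≥ 1 and all a, b, c, d ≥ 0, the number of permutations π ∈ SP_n(132) with des(π)+1 = a, rpk(π) = b, exddes(π) = c and inv(π) = d equals the number of set partitions p of [n] with block(p) = a, nsingleton(p) = b, singleton(p) = c and fr(p) = d. -/
open scoped Classical

/-- The word `π(1)π(2)⋯π(n)` of a permutation of `[n]`, with values in `{1,…,n}`. -/
def permWord {n : ℕ} (π : Equiv.Perm (Fin n)) : List ℕ :=
  List.ofFn fun i => (π i : ℕ) + 1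

/-- The restriction of a word to `[k]`: the subword of entries `≤ k`. -/
def restrict (w : List ℕ) (k : ℕ) : List ℕ := w.filter (fun x => x ≤ k)

/-- A succession of a word: an index `i` with `w(i+1) = w(i) + 1`. -/
def hasSuccession (w : List ℕ) : Prop :=
  ∃ i, i + 1 < w.length ∧ w.getD (i + 1) 0 = w.getD i 0 + 1

/-- The number of descents of a word. -/
def desList (w : List ℕ) : ℕ :=
  (List.range (w.length - 1)).countP fun i =>
    decide (w.getD (i + 1) 0 < w.getD i 0)

/-- A word contains the pattern `τ` consecutively: some window of `τ.length` adjacent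
entries is order-isomorphic to `τ`. -/
def containsPattern (τ w : List ℕ) : Prop :=
  ∃ i, i + τ.length ≤ w.length ∧ ∀ a < τ.length, ∀ b < τ.length,
    (τ.getD a 0 < τ.getD b 0 ↔ w.getD (i + a) 0 < w.getD (i + b) 0)

/-- `SP_n(τ)`: permutations all of whose restrictions to `[k]` avoid the consecutive
pattern `τ`. -/
def AvoidsSP {n : ℕ} (τ : List ℕ) (π : Equiv.Perm (Fin n)) : Prop :=
  ∀ k, ¬ containsPattern τ (restrict (permWord π) k)

/-- The number of right peaks: indices `i ∈ {2,…,n}` (1-based) with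
`w(i-1) < w(i) > w(i+1)`, where `w(n+1) = 0`. -/
def rpkList (w : List ℕ) : ℕ :=
  (List.range w.length).countP fun i =>
    decide (1 ≤ i ∧ w.getD (i - 1) 0 < w.getD i 0 ∧ w.getD (i + 1) 0 < w.getD i 0)

/-- The number of exterior double descents: indices `i ∈ [n]` (1-based) with
`w(i-1) > w(i) > w(i+1)`, where `w(0) = +∞` and `w(n+1) = 0`. -/
def exddesList (w : List ℕ) : ℕ :=
  (List.range w.length).countP fun i =>
    decide ((i = 0 ∨ w.getD i 0 < w.getD (i - 1) 0) ∧ w.getD (i + 1) 0 < w.getD i 0)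

/-- The number of inversions of a word. -/
def invList (w : List ℕ) : ℕ :=
  ((Finset.range w.length ×ˢ Finset.range w.length).filter fun p =>
    p.1 < p.2 ∧ w.getD p.2 0 < w.getD p.1 0).card

/-- The minimum of a block (a finite set of naturals). -/
noncomputable def bmin (B : Finset ℕ) : ℕ := sInf (B : Set ℕ)

/-- The number of singleton blocks of a set partition of `[n] = {1,…,n}`. -/
def singletonCount {n : ℕ} (p : Finpartition (Finset.Icc 1 n)) : ℕ :=
  (p.parts.filter fun B => B.card = 1).card

/-- The number of non-singleton blocks of a set partition of `[n]`. -/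
def nsingletonCount {n : ℕ} (p : Finpartition (Finset.Icc 1 n)) : ℕ :=
  (p.parts.filter fun B => 2 ≤ B.card).card

/-- The number of free rises of a set partition of `[n]`: pairs `(c,d)` with `c < d`,
`c ∈ B_s`, `d ∈ B_t` and `s < t`, where the blocks are ordered by their minima. -/
noncomputable def frCount {n : ℕ} (p : Finpartition (Finset.Icc 1 n)) : ℕ :=
  (((Finset.Icc 1 n) ×ˢ (Finset.Icc 1 n)).filter fun cd =>
    cd.1 < cd.2 ∧ ∃ B ∈ p.parts, ∃ B' ∈ p.parts,
      cd.1 ∈ B ∧ cd.2 ∈ B' ∧ bmin B < bmin B').card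

namespace SP10

variable {n : ℕ}

noncomputable def hm (p : Finpartition (Finset.Icc 1 n)) (x : ℕ) : ℕ := bmin (p.part x)

noncomputable def key (p : Finpartition (Finset.Icc 1 n)) (x : ℕ) : ℕ :=
  (n - hm p x) * (n + 1) + x
noncomputable def wp (p : Finpartition (Finset.Icc 1 n)) : List ℕ :=
  (((Finset.Icc 1 n).image (key p)).sort (· ≤ ·)).map (fun k => k % (n + 1))

variable (p : Finpartition (Finset.Icc 1 n)) {x y : ℕ}
lemma bmin_mem {B : Finset ℕ} (hB : B.Nonempty) : bmin B ∈ B := by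
  have : (B : Set ℕ).Nonempty := by exact_mod_cast hB
  have := Nat.sInf_mem this
  exact_mod_cast this
lemma bmin_le {B : Finset ℕ} (hy : y ∈ B) : bmin B ≤ y := Nat.sInf_le (by exact_mod_cast hy)
lemma hm_mem (hx : x ∈ Finset.Icc 1 n) : hm p x ∈ p.part x :=
  bmin_mem ⟨x, p.mem_part hx⟩
lemma hm_le (hx : x ∈ Finset.Icc 1 n) : hm p x ≤ x := bmin_le (p.mem_part hx)
lemma hm_mem_Icc (hx : x ∈ Finset.Icc 1 n) : hm p x ∈ Finset.Icc 1 n :=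
  p.le (p.part_mem.2 hx) (hm_mem p hx)
lemma part_hm (hx : x ∈ Finset.Icc 1 n) : p.part (hm p x) = p.part x :=
  p.part_eq_of_mem (p.part_mem.2 hx) (hm_mem p hx)
lemma hm_idem (hx : x ∈ Finset.Icc 1 n) : hm p (hm p x) = hm p x := by
  show bmin (p.part (bmin (p.part x))) = bmin (p.part x)
  congr 1
  exact part_hm p hx
lemma part_eq_iff_hm_eq (hx : x ∈ Finset.Icc 1 n) (hy : y ∈ Finset.Icc 1 n) :
    p.part x = p.part y ↔ hm p x = hm p y := by
  constructor
  · intro h; unfold hm; rw [h]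
  · intro h
    have h1 : hm p x ∈ p.part x := hm_mem p hx
    have h2 : hm p x ∈ p.part y := h ▸ hm_mem p hy
    exact ((p.part_eq_of_mem (p.part_mem.2 hy) h2).symm.trans
      (p.part_eq_of_mem (p.part_mem.2 hx) h1)).symm
lemma key_lt_iff (hx : x ∈ Finset.Icc 1 n) (hy : y ∈ Finset.Icc 1 n) :
    key p x < key p y ↔ hm p y < hm p x ∨ (hm p x = hm p y ∧ x < y) := by
  have hxn : x ≤ n := (Finset.mem_Icc.1 hx).2
  have hyn : y ≤ n := (Finset.mem_Icc.1 hy).2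
  have hax : hm p x ≤ n := (Finset.mem_Icc.1 (hm_mem_Icc p hx)).2
  have hay : hm p y ≤ n := (Finset.mem_Icc.1 (hm_mem_Icc p hy)).2
  have h1x : 1 ≤ hm p x := (Finset.mem_Icc.1 (hm_mem_Icc p hx)).1
  have h1y : 1 ≤ hm p y := (Finset.mem_Icc.1 (hm_mem_Icc p hy)).1
  unfold key
  rcases lt_trichotomy (hm p x) (hm p y) with h | h | h
  · have hAB : n - hm p y < n - hm p x := by omega
    have : (n - hm p y + 1) * (n + 1) ≤ (n - hm p x) * (n + 1) :=
      Nat.mul_le_mul_right _ (by omega)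
    constructor
    · intro hk; exfalso; nlinarith [this]
    · intro hk; rcases hk with hk | hk <;> omega
  · rw [h]; constructor
    · intro hk; right; exact ⟨rfl, by omega⟩
    · intro hk; rcases hk with hk | hk <;> omega
  · have hAB : n - hm p x < n - hm p y := by omega
    have : (n - hm p x + 1) * (n + 1) ≤ (n - hm p y) * (n + 1) :=
      Nat.mul_le_mul_right _ (by omega)
    constructor
    · intro hk; left; exact h
    · intro hk; nlinarith [this]
lemma key_mod (hx : x ∈ Finset.Icc 1 n) : key p x % (n + 1) = x := by
  have hxn : x ≤ n := (Finset.mem_Icc.1 hx).2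
  unfold key
  rw [Nat.add_comm, Nat.add_mul_mod_self_right]
  exact Nat.mod_eq_of_lt (by omega)
lemma key_injOn : Set.InjOn (key p) (Finset.Icc 1 n) := by
  intro a ha b hb h
  have := key_mod p (x := a) (by exact_mod_cast ha)
  rw [h, key_mod p (by exact_mod_cast hb)] at this
  exact this.symm


noncomputable def wv (p : Finpartition (Finset.Icc 1 n)) (i : ℕ) : ℕ := (wp p).getD i 0

lemma wp_length : (wp p).length = n := by
  unfold wp
  rw [List.length_map, Finset.length_sort,
    Finset.card_image_of_injOn (key_injOn p), Nat.card_Icc]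
  omega

lemma mem_wp {z : ℕ} : z ∈ wp p ↔ z ∈ Finset.Icc 1 n := by
  unfold wp
  simp only [List.mem_map, Finset.mem_sort, Finset.mem_image]
  constructor
  · rintro ⟨k, ⟨u, hu, rfl⟩, rfl⟩
    rwa [key_mod p hu]
  · intro hz
    exact ⟨key p z, ⟨z, hz, rfl⟩, key_mod p hz⟩

lemma wv_mem {i : ℕ} (hi : i < n) : wv p i ∈ Finset.Icc 1 n := by
  rw [← mem_wp p]
  unfold wv
  rw [List.getD_eq_getElem _ _ (by rw [wp_length p]; exact hi)]
  exact List.getElem_mem _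

lemma key_wv (i : ℕ) (hi : i < n) :
    key p (wv p i) = (((Finset.Icc 1 n).image (key p)).sort (· ≤ ·)).getD i 0 := by
  have hlen : (((Finset.Icc 1 n).image (key p)).sort (· ≤ ·)).length = n := by
    rw [Finset.length_sort, Finset.card_image_of_injOn (key_injOn p), Nat.card_Icc]; omega
  have hlen2 : (wp p).length = n := wp_length p
  unfold wv
  rw [List.getD_eq_getElem _ _ (by rw [hlen2]; exact hi),
      List.getD_eq_getElem _ _ (by rw [hlen]; exact hi)]
  have hmem : (((Finset.Icc 1 n).image (key p)).sort (· ≤ ·))[i] ∈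
      ((Finset.Icc 1 n).image (key p)).sort (· ≤ ·) := List.getElem_mem _
  rw [Finset.mem_sort, Finset.mem_image] at hmem
  obtain ⟨u, hu, huk⟩ := hmem
  simp only [wp, List.getElem_map]
  rw [← huk, key_mod p hu, huk]

lemma key_wv_lt {i j : ℕ} (hij : i < j) (hj : j < n) :
    key p (wv p i) < key p (wv p j) := by
  have hlen : (((Finset.Icc 1 n).image (key p)).sort (· ≤ ·)).length = n := by
    rw [Finset.length_sort, Finset.card_image_of_injOn (key_injOn p), Nat.card_Icc]; omega
  rw [key_wv p i (hij.trans hj), key_wv p j hj]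
  have hs : (((Finset.Icc 1 n).image (key p)).sort (· ≤ ·)).Pairwise (· < ·) :=
    ((Finset.pairwise_sort _ _).and (Finset.sort_nodup _ _)).imp (fun h => lt_of_le_of_ne h.1 h.2)
  rw [List.getD_eq_getElem _ _ (by omega), List.getD_eq_getElem _ _ (by omega)]
  exact List.pairwise_iff_getElem.1 hs i j (by omega) (by omega) hij

lemma exists_wv (hx : x ∈ Finset.Icc 1 n) : ∃ i, i < n ∧ wv p i = x := by
  have : x ∈ wp p := (mem_wp p).2 hx
  obtain ⟨i, hi, hwi⟩ := List.getElem_of_mem this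
  refine ⟨i, by rw [wp_length p] at hi; exact hi, ?_⟩
  unfold wv
  rw [List.getD_eq_getElem _ _ hi, hwi]

lemma pos_lt_of_key_lt {i j : ℕ} (hi : i < n) (hj : j < n)
    (h : key p (wv p i) < key p (wv p j)) : i < j := by
  rcases lt_trichotomy i j with h' | h' | h'
  · exact h'
  · subst h'; omega
  · exact absurd (key_wv_lt p h' hi) (by omega)

lemma wv_inj {i j : ℕ} (hi : i < n) (hj : j < n) (h : wv p i = wv p j) : i = j := by
  rcases lt_trichotomy i j with h' | h' | h'
  · have := key_wv_lt p h' hj; rw [h] at this; omega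
  · exact h'
  · have := key_wv_lt p h' hi; rw [h] at this; omega

lemma gap {i : ℕ} (hi : i + 1 < n) (hx : x ∈ Finset.Icc 1 n)
    (h1 : key p (wv p i) < key p x) (h2 : key p x < key p (wv p (i + 1))) : False := by
  obtain ⟨m, hm, rfl⟩ := exists_wv p hx
  have := pos_lt_of_key_lt p (by omega) hm h1
  have := pos_lt_of_key_lt p hm (by omega) h2
  omega


def IsMaxB (p : Finpartition (Finset.Icc 1 n)) (x : ℕ) : Prop := ∀ y ∈ p.part x, y ≤ x
def IsMinB (p : Finpartition (Finset.Icc 1 n)) (x : ℕ) : Prop := ∀ y ∈ p.part x, x ≤ y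

lemma wv_oob {i : ℕ} (hi : n ≤ i) : wv p i = 0 := by
  unfold wv
  exact List.getD_eq_default _ _ (by rw [wp_length p]; exact hi)

lemma one_le_wv {i : ℕ} (hi : i < n) : 1 ≤ wv p i := (Finset.mem_Icc.1 (wv_mem p hi)).1

lemma mem_part_icc {z : ℕ} (hx : x ∈ Finset.Icc 1 n) (hz : z ∈ p.part x) :
    z ∈ Finset.Icc 1 n := p.le (p.part_mem.2 hx) hz

lemma hm_eq_of_mem_part {z : ℕ} (hx : x ∈ Finset.Icc 1 n) (hz : z ∈ p.part x) :
    hm p z = hm p x := by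
  have hzI := mem_part_icc p hx hz
  exact ((part_eq_iff_hm_eq p hzI hx).1 (p.part_eq_of_mem (p.part_mem.2 hx) hz))

lemma des_iff {i : ℕ} (hi : i < n) :
    wv p (i + 1) < wv p i ↔ IsMaxB p (wv p i) := by
  set x := wv p i with hxdef
  have hx : x ∈ Finset.Icc 1 n := wv_mem p hi
  by_cases hi1 : i + 1 < n
  · set z := wv p (i + 1) with hzdef
    have hz : z ∈ Finset.Icc 1 n := wv_mem p hi1
    have hkxz : key p x < key p z := key_wv_lt p (Nat.lt_succ_self i) hi1
    constructor
    · intro hlt y hy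
      by_contra hxy
      push_neg at hxy
      have hyI : y ∈ Finset.Icc 1 n := mem_part_icc p hx hy
      have hhm : hm p y = hm p x := hm_eq_of_mem_part p hx hy
      have hhmzx : hm p z < hm p x := by
        rcases (key_lt_iff p hx hz).1 hkxz with h | ⟨h, h2⟩
        · exact h
        · omega
      have hkxy : key p x < key p y := (key_lt_iff p hx hyI).2 (Or.inr ⟨hhm.symm, hxy⟩)
      have hkyz : key p y < key p z := (key_lt_iff p hyI hz).2 (Or.inl (by omega))
      obtain ⟨m, hmn, rfl⟩ := exists_wv p hyI
      have h1 := pos_lt_of_key_lt p hi hmn hkxy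
      have h2 := pos_lt_of_key_lt p hmn hi1 hkyz
      omega
    · intro hMax
      have hne : z ≠ x := by
        intro h; rw [h] at hkxz; omega
      by_contra hzx
      push_neg at hzx
      have hxz : x < z := lt_of_le_of_ne hzx (Ne.symm hne)
      rcases (key_lt_iff p hx hz).1 hkxz with h | ⟨h, h2⟩
      · -- hm z < hm x
        set m' := hm p z with hm'def
        have hm'I : m' ∈ Finset.Icc 1 n := hm_mem_Icc p hz
        have hm'le : m' ≤ z := hm_le p hz
        by_cases hm'z : m' = z
        · have : hm p x ≤ x := hm_le p hx
          omega
        · have hm'lt : m' < z := lt_of_le_of_ne hm'le hm'z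
          have hidem : hm p m' = hm p z := hm_idem p hz
          have hk1 : key p x < key p m' := (key_lt_iff p hx hm'I).2 (Or.inl (by omega))
          have hk2 : key p m' < key p z := (key_lt_iff p hm'I hz).2 (Or.inr ⟨hidem, hm'lt⟩)
          exact gap p hi1 hm'I hk1 hk2
      · -- same block
        have hzpart : z ∈ p.part x := by
          rw [← (part_eq_iff_hm_eq p hz hx).2 h.symm]
          exact p.mem_part hz
        have := hMax z hzpart
        omega
  · -- i + 1 = n
    have hin : i + 1 = n := by omega
    have hz0 : wv p (i + 1) = 0 := wv_oob p (by omega)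
    rw [hz0]
    constructor
    · intro _ y hy
      by_contra hxy
      push_neg at hxy
      have hyI : y ∈ Finset.Icc 1 n := mem_part_icc p hx hy
      have hhm : hm p y = hm p x := hm_eq_of_mem_part p hx hy
      have hkxy : key p x < key p y := (key_lt_iff p hx hyI).2 (Or.inr ⟨hhm.symm, hxy⟩)
      obtain ⟨m, hmn, rfl⟩ := exists_wv p hyI
      have := pos_lt_of_key_lt p hi hmn hkxy
      omega
    · intro _
      exact one_le_wv p hi

lemma asc_iff {i : ℕ} (hi : i < n) :
    (1 ≤ i ∧ wv p (i - 1) < wv p i) ↔ ¬ IsMinB p (wv p i) := by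
  set x := wv p i with hxdef
  have hx : x ∈ Finset.Icc 1 n := wv_mem p hi
  constructor
  · rintro ⟨hi1, hlt⟩
    set y := wv p (i - 1) with hydef
    have hyI : y ∈ Finset.Icc 1 n := wv_mem p (by omega)
    have hky : key p y < key p x := by
      have := key_wv_lt p (show i - 1 < i by omega) hi
      simpa using this
    intro hMin
    rcases (key_lt_iff p hyI hx).1 hky with h | ⟨h, h2⟩
    · -- hm x < hm y
      have h1 : hm p y ≤ y := hm_le p hyI
      have h2 : hm p x ≤ x := hm_le p hx
      have hxmin : x ≤ hm p x := hMin _ (hm_mem p hx)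
      -- so hm x = x, but hm y ≤ y < x = hm x < hm y, contradiction
      omega
    · have hypart : y ∈ p.part x := by
        rw [← (part_eq_iff_hm_eq p hyI hx).2 h]
        exact p.mem_part hyI
      have := hMin y hypart
      omega
  · intro hMin
    unfold IsMinB at hMin
    push_neg at hMin
    obtain ⟨y, hy, hxy⟩ := hMin
    have hyI : y ∈ Finset.Icc 1 n := mem_part_icc p hx hy
    have hmlt : hm p x < x := lt_of_le_of_lt (bmin_le hy) hxy
    set m' := hm p x with hm'def
    have hm'I : m' ∈ Finset.Icc 1 n := hm_mem_Icc p hx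
    have hk1 : key p m' < key p x := (key_lt_iff p hm'I hx).2 (Or.inr ⟨hm_idem p hx, hmlt⟩)
    obtain ⟨j, hjn, hjw⟩ := exists_wv p hm'I
    have hji : j < i := pos_lt_of_key_lt p hjn hi (by rw [hjw]; exact hk1)
    have hi1 : 1 ≤ i := by omega
    refine ⟨hi1, ?_⟩
    set y' := wv p (i - 1) with hy'def
    have hy'I : y' ∈ Finset.Icc 1 n := wv_mem p (by omega)
    have hky' : key p y' < key p x := by
      have := key_wv_lt p (show i - 1 < i by omega) hi
      simpa using this
    have hkm'y' : key p m' ≤ key p y' := by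
      rcases Nat.lt_or_ge j (i - 1) with h | h
      · exact le_of_lt (by rw [← hjw]; exact key_wv_lt p h (by omega))
      · have : j = i - 1 := by omega
        rw [← hjw, this]
    rcases (key_lt_iff p hy'I hx).1 hky' with h | ⟨h, h2⟩
    · exfalso
      have : key p y' < key p m' := (key_lt_iff p hy'I hm'I).2 (Or.inl (by rw [hm_idem p hx]; omega))
      omega
    · exact h2

lemma min_iff {i : ℕ} (hi : i < n) :
    (i = 0 ∨ wv p i < wv p (i - 1)) ↔ IsMinB p (wv p i) := by
  have h := asc_iff p hi
  by_cases hi0 : i = 0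
  · subst hi0
    have hMin : IsMinB p (wv p 0) := by
      by_contra hc
      have := h.2 hc
      omega
    exact ⟨fun _ => hMin, fun _ => Or.inl rfl⟩
  · have hne : wv p (i - 1) ≠ wv p i := fun he =>
      hi0 (by have := wv_inj p (show i - 1 < n by omega) hi he; omega)
    constructor
    · intro hd
      by_contra hMin
      rw [← h] at hMin
      obtain ⟨h1, h2⟩ := hMin
      rcases hd with hd | hd
      · exact hi0 hd
      · omega
    · intro hMin
      right
      have h2 : ¬ (1 ≤ i ∧ wv p (i - 1) < wv p i) := fun hc => (h.1 hc) hMin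
      have h3 : ¬ (wv p (i - 1) < wv p i) := fun hc => h2 ⟨by omega, hc⟩
      rcases lt_trichotomy (wv p i) (wv p (i - 1)) with h4 | h4 | h4
      · exact h4
      · exact absurd h4.symm hne
      · exact absurd h4 h3

lemma countP_range (q : ℕ → Bool) (m : ℕ) :
    (List.range m).countP q = ((Finset.range m).filter (fun i => q i = true)).card := by
  induction m with
  | zero => simp
  | succ m ih =>
    rw [List.range_succ, List.countP_append, Finset.range_add_one, Finset.filter_insert]
    by_cases hq : q m = true
    · rw [if_pos hq, Finset.card_insert_of_notMem (by simp), List.countP_cons, ih]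
      simp [hq]
    · rw [if_neg hq, List.countP_cons, ih]
      simp [hq]

lemma card_filter_pos_eq_card_filter_val (P : ℕ → Prop) [DecidablePred P] :
    ((Finset.range n).filter (fun i => P (wv p i))).card =
    ((Finset.Icc 1 n).filter P).card := by
  apply Finset.card_bij (fun i _ => wv p i)
  · intro i hi
    rw [Finset.mem_filter] at hi ⊢
    exact ⟨wv_mem p (Finset.mem_range.1 hi.1), hi.2⟩
  · intro i hi j hj h
    rw [Finset.mem_filter, Finset.mem_range] at hi hj
    exact wv_inj p hi.1 hj.1 h
  · intro x hx
    rw [Finset.mem_filter] at hx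
    obtain ⟨i, hi, rfl⟩ := exists_wv p hx.1
    exact ⟨i, Finset.mem_filter.2 ⟨Finset.mem_range.2 hi, hx.2⟩, rfl⟩

lemma card_isMax : ((Finset.Icc 1 n).filter (IsMaxB p)).card = p.parts.card := by
  apply Finset.card_bij (fun x _ => p.part x)
  · intro x hx
    rw [Finset.mem_filter] at hx
    exact p.part_mem.2 hx.1
  · intro x hx y hy h
    rw [Finset.mem_filter] at hx hy
    have h1 : y ≤ x := hx.2 y (h ▸ p.mem_part hy.1)
    have h2 : x ≤ y := hy.2 x (h ▸ p.mem_part hx.1)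
    omega
  · intro B hB
    have hne : B.Nonempty := p.nonempty_of_mem_parts hB
    set x := B.max' hne with hxd
    have hxB : x ∈ B := B.max'_mem hne
    have hxI : x ∈ Finset.Icc 1 n := p.le hB hxB
    have hpart : p.part x = B := p.part_eq_of_mem hB hxB
    refine ⟨x, Finset.mem_filter.2 ⟨hxI, ?_⟩, hpart⟩
    intro y hy
    rw [hpart] at hy
    exact B.le_max' y hy

lemma card_nsingleton :
    ((Finset.Icc 1 n).filter (fun x => ¬ IsMinB p x ∧ IsMaxB p x)).card =
    (p.parts.filter fun B => 2 ≤ B.card).card := by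
  apply Finset.card_bij (fun x _ => p.part x)
  · intro x hx
    rw [Finset.mem_filter] at hx
    obtain ⟨hxI, hMin, hMax⟩ := hx
    refine Finset.mem_filter.2 ⟨p.part_mem.2 hxI, ?_⟩
    unfold IsMinB at hMin
    push_neg at hMin
    obtain ⟨y, hy, hyx⟩ := hMin
    rw [show (2 : ℕ) = 1 + 1 from rfl]
    apply Finset.one_lt_card.2
    exact ⟨x, p.mem_part hxI, y, hy, by omega⟩
  · intro x hx y hy h
    rw [Finset.mem_filter] at hx hy
    have h1 : y ≤ x := hx.2.2 y (h ▸ p.mem_part hy.1)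
    have h2 : x ≤ y := hy.2.2 x (h ▸ p.mem_part hx.1)
    omega
  · intro B hB
    rw [Finset.mem_filter] at hB
    obtain ⟨hB, hcard⟩ := hB
    have hne : B.Nonempty := p.nonempty_of_mem_parts hB
    set x := B.max' hne with hxd
    have hxB : x ∈ B := B.max'_mem hne
    have hxI : x ∈ Finset.Icc 1 n := p.le hB hxB
    have hpart : p.part x = B := p.part_eq_of_mem hB hxB
    refine ⟨x, Finset.mem_filter.2 ⟨hxI, ?_, ?_⟩, hpart⟩
    · intro hMin
      obtain ⟨y, hy, hyx⟩ := Finset.exists_mem_ne (s := B) (by omega) x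
      have := hMin y (hpart ▸ hy)
      have := B.le_max' y hy
      exact hyx (by omega)
    · intro y hy
      rw [hpart] at hy
      exact B.le_max' y hy

lemma card_singleton' :
    ((Finset.Icc 1 n).filter (fun x => IsMinB p x ∧ IsMaxB p x)).card =
    (p.parts.filter fun B => B.card = 1).card := by
  apply Finset.card_bij (fun x _ => p.part x)
  · intro x hx
    rw [Finset.mem_filter] at hx
    obtain ⟨hxI, hMin, hMax⟩ := hx
    refine Finset.mem_filter.2 ⟨p.part_mem.2 hxI, ?_⟩
    rw [Finset.card_eq_one]
    refine ⟨x, ?_⟩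
    ext y
    simp only [Finset.mem_singleton]
    constructor
    · intro hy
      have := hMin y hy
      have := hMax y hy
      omega
    · rintro rfl; exact p.mem_part hxI
  · intro x hx y hy h
    rw [Finset.mem_filter] at hx hy
    have h1 : y ≤ x := hx.2.2 y (h ▸ p.mem_part hy.1)
    have h2 : x ≤ y := hy.2.2 x (h ▸ p.mem_part hx.1)
    omega
  · intro B hB
    rw [Finset.mem_filter] at hB
    obtain ⟨hB, hcard⟩ := hB
    rw [Finset.card_eq_one] at hcard
    obtain ⟨x, rfl⟩ := hcard
    have hxB : x ∈ ({x} : Finset ℕ) := Finset.mem_singleton_self x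
    have hxI : x ∈ Finset.Icc 1 n := p.le hB hxB
    have hpart : p.part x = {x} := p.part_eq_of_mem hB hxB
    refine ⟨x, Finset.mem_filter.2 ⟨hxI, ?_, ?_⟩, hpart⟩
    · intro y hy
      rw [hpart, Finset.mem_singleton] at hy
      omega
    · intro y hy
      rw [hpart, Finset.mem_singleton] at hy
      omega

theorem desList_wp (hn : 1 ≤ n) : desList (wp p) + 1 = p.parts.card := by
  obtain ⟨m, rfl⟩ : ∃ m, n = m + 1 := ⟨n - 1, by omega⟩
  unfold desList
  rw [wp_length, countP_range]
  have hconv : ((Finset.range (m + 1)).filter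
      (fun i => decide ((wp p).getD (i + 1) 0 < (wp p).getD i 0) = true)).card
      = p.parts.card := by
    have he : ((Finset.range (m + 1)).filter
        (fun i => decide ((wp p).getD (i + 1) 0 < (wp p).getD i 0) = true))
        = ((Finset.range (m + 1)).filter (fun i => IsMaxB p (wv p i))) := by
      apply Finset.filter_congr
      intro i hi
      rw [Finset.mem_range] at hi
      simp only [decide_eq_true_iff]
      exact ⟨fun h => (des_iff p hi).1 h, fun h => (des_iff p hi).2 h⟩
    rw [he]
    exact (card_filter_pos_eq_card_filter_val p (IsMaxB p)).trans (card_isMax p)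
  have hlast : decide ((wp p).getD (m + 1) 0 < (wp p).getD m 0) = true := by
    simp only [decide_eq_true_iff]
    show wv p (m + 1) < wv p m
    rw [wv_oob p (by omega)]
    exact one_le_wv p (by omega)
  rw [Finset.range_add_one, Finset.filter_insert, if_pos hlast,
    Finset.card_insert_of_notMem (by simp)] at hconv
  have : m + 1 - 1 = m := by omega
  rw [this]
  omega

theorem rpkList_wp : rpkList (wp p) = nsingletonCount p := by
  unfold rpkList nsingletonCount
  rw [wp_length, countP_range]
  have he : ((Finset.range n).filter
      (fun i => decide (1 ≤ i ∧ (wp p).getD (i-1) 0 < (wp p).getD i 0 ∧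
        (wp p).getD (i+1) 0 < (wp p).getD i 0) = true))
      = ((Finset.range n).filter (fun i => (¬ IsMinB p (wv p i) ∧ IsMaxB p (wv p i)))) := by
    apply Finset.filter_congr
    intro i hi
    rw [Finset.mem_range] at hi
    simp only [decide_eq_true_iff]
    constructor
    · rintro ⟨h1, h2, h3⟩
      exact ⟨(asc_iff p hi).1 ⟨h1, h2⟩, (des_iff p hi).1 h3⟩
    · rintro ⟨h1, h2⟩
      obtain ⟨ha, hb⟩ := (asc_iff p hi).2 h1
      exact ⟨ha, hb, (des_iff p hi).2 h2⟩
  rw [he]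
  rw [card_filter_pos_eq_card_filter_val p (fun x => ¬ IsMinB p x ∧ IsMaxB p x)]
  exact card_nsingleton p

theorem exddesList_wp : exddesList (wp p) = singletonCount p := by
  unfold exddesList singletonCount
  rw [wp_length, countP_range]
  have he : ((Finset.range n).filter
      (fun i => decide ((i = 0 ∨ (wp p).getD i 0 < (wp p).getD (i-1) 0) ∧
        (wp p).getD (i+1) 0 < (wp p).getD i 0) = true))
      = ((Finset.range n).filter (fun i => (IsMinB p (wv p i) ∧ IsMaxB p (wv p i)))) := by
    apply Finset.filter_congr
    intro i hi
    rw [Finset.mem_range] at hi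
    simp only [decide_eq_true_iff]
    constructor
    · rintro ⟨h1, h3⟩
      exact ⟨(min_iff p hi).1 h1, (des_iff p hi).1 h3⟩
    · rintro ⟨h1, h2⟩
      exact ⟨(min_iff p hi).2 h1, (des_iff p hi).2 h2⟩
  rw [he]
  rw [card_filter_pos_eq_card_filter_val p (fun x => IsMinB p x ∧ IsMaxB p x)]
  exact card_singleton' p

theorem invList_wp : invList (wp p) = frCount p := by
  unfold invList frCount
  rw [wp_length]
  apply Finset.card_bij (fun ij _ => ((wp p).getD ij.2 0, (wp p).getD ij.1 0))
  · rintro ⟨i, j⟩ hij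
    rw [Finset.mem_filter, Finset.mem_product] at hij
    obtain ⟨⟨hi, hj⟩, hlt, hvlt⟩ := hij
    rw [Finset.mem_range] at hi hj
    have hlt' : i < j := hlt
    have hvlt' : wv p j < wv p i := hvlt
    have hkey := key_wv_lt p hlt' hj
    have hhm : hm p (wv p j) < hm p (wv p i) := by
      rcases (key_lt_iff p (wv_mem p hi) (wv_mem p hj)).1 hkey with h | ⟨h, h2⟩
      · exact h
      · exfalso
        have h2' : wv p i < wv p j := h2
        omega
    refine Finset.mem_filter.2 ⟨Finset.mem_product.2 ⟨wv_mem p hj, wv_mem p hi⟩, hvlt', ?_⟩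
    exact ⟨p.part (wv p j), p.part_mem.2 (wv_mem p hj), p.part (wv p i), p.part_mem.2 (wv_mem p hi),
      p.mem_part (wv_mem p hj), p.mem_part (wv_mem p hi), hhm⟩
  · rintro ⟨i, j⟩ hij ⟨i', j'⟩ hij' h
    rw [Finset.mem_filter, Finset.mem_product] at hij hij'
    obtain ⟨⟨hi, hj⟩, _, _⟩ := hij
    obtain ⟨⟨hi', hj'⟩, _, _⟩ := hij'
    rw [Finset.mem_range] at hi hj hi' hj'
    rw [Prod.ext_iff] at h
    obtain ⟨h1, h2⟩ := h
    have e1 : j = j' := wv_inj p hj hj' h1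
    have e2 : i = i' := wv_inj p hi hi' h2
    rw [Prod.ext_iff]
    exact ⟨e2, e1⟩
  · rintro ⟨c, d⟩ hcd
    rw [Finset.mem_filter, Finset.mem_product] at hcd
    obtain ⟨⟨hc, hd⟩, hlt, B, hB, B', hB', hcB, hdB', hbb⟩ := hcd
    have hBc : p.part c = B := p.part_eq_of_mem hB hcB
    have hBd : p.part d = B' := p.part_eq_of_mem hB' hdB'
    have hhm : hm p c < hm p d := by
      unfold hm
      rw [hBc, hBd]
      exact hbb
    have hkey : key p d < key p c := (key_lt_iff p hd hc).2 (Or.inl hhm)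
    obtain ⟨i, hi, hwi⟩ := exists_wv p hd
    obtain ⟨j, hj, hwj⟩ := exists_wv p hc
    have hij : i < j := pos_lt_of_key_lt p hi hj (by rw [hwi, hwj]; exact hkey)
    refine ⟨(i, j), Finset.mem_filter.2 ⟨Finset.mem_product.2
      ⟨Finset.mem_range.2 hi, Finset.mem_range.2 hj⟩, hij, ?_⟩, ?_⟩
    · show wv p j < wv p i
      rw [hwi, hwj]
      exact hlt
    · show (wv p j, wv p i) = (c, d)
      rw [hwi, hwj]

lemma wp_pairwise : (wp p).Pairwise (fun x y => key p x < key p y) := by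
  rw [List.pairwise_iff_getElem]
  intro i j hi hj hij
  rw [wp_length] at hi hj
  have := key_wv_lt p hij hj
  unfold wv at this
  rwa [List.getD_eq_getElem _ _ (by rw [wp_length]; exact hi),
    List.getD_eq_getElem _ _ (by rw [wp_length]; exact hj)] at this

lemma pos_lt_of_pairwise {l : List ℕ} (hl : l.Pairwise (fun x y => key p x < key p y))
    {a b : ℕ} (ha : a < l.length) (hb : b < l.length)
    (h : key p (l.getD a 0) < key p (l.getD b 0)) : a < b := by
  rw [List.pairwise_iff_getElem] at hl
  rcases lt_trichotomy a b with h' | h' | h'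
  · exact h'
  · subst h'; omega
  · have := hl b a hb ha h'
    rw [List.getD_eq_getElem _ _ ha, List.getD_eq_getElem _ _ hb] at h
    omega

lemma no132 (k : ℕ) : ¬ containsPattern [1, 3, 2] ((wp p).filter (fun x => x ≤ k)) := by
  set u := (wp p).filter (fun x => x ≤ k) with hu
  rintro ⟨i, hlen, hiff⟩
  have hτ : ([1, 3, 2] : List ℕ).length = 3 := rfl
  rw [hτ] at hlen
  have hup : u.Pairwise (fun x y => key p x < key p y) :=
    (wp_pairwise p).sublist List.filter_sublist
  have humem : ∀ x ∈ u, x ∈ Finset.Icc 1 n ∧ x ≤ k := by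
    intro x hx
    rw [hu, List.mem_filter] at hx
    exact ⟨(mem_wp p).1 hx.1, by simpa using hx.2⟩
  have hclos : ∀ x ∈ u, hm p x ∈ u := by
    intro x hx
    obtain ⟨hxI, hxk⟩ := humem x hx
    rw [hu, List.mem_filter]
    constructor
    · exact (mem_wp p).2 (hm_mem_Icc p hxI)
    · simp only [decide_eq_true_iff]
      exact le_trans (hm_le p hxI) hxk
  have h01 := (hiff 0 (by omega) 1 (by omega)).1 (by norm_num)
  have h21 := (hiff 2 (by omega) 1 (by omega)).1 (by norm_num)
  have h02 := (hiff 0 (by omega) 2 (by omega)).1 (by norm_num)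
  rw [Nat.add_zero] at h01 h02
  set U0 := u.getD i 0 with hU0
  set U1 := u.getD (i + 1) 0 with hU1
  set U2 := u.getD (i + 2) 0 with hU2
  have hi0 : i < u.length := by omega
  have hi1 : i + 1 < u.length := by omega
  have hi2 : i + 2 < u.length := by omega
  have hU0m : U0 ∈ u := by rw [hU0, List.getD_eq_getElem _ _ hi0]; exact List.getElem_mem _
  have hU1m : U1 ∈ u := by rw [hU1, List.getD_eq_getElem _ _ hi1]; exact List.getElem_mem _
  have hU2m : U2 ∈ u := by rw [hU2, List.getD_eq_getElem _ _ hi2]; exact List.getElem_mem _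
  have hU0I := (humem U0 hU0m).1
  have hU1I := (humem U1 hU1m).1
  have hU2I := (humem U2 hU2m).1
  have hpg : ∀ a b : ℕ, a < u.length → b < u.length → a < b →
      key p (u.getD a 0) < key p (u.getD b 0) := by
    intro a b ha hb hab
    rw [List.pairwise_iff_getElem] at hup
    have := hup a b ha hb hab
    rwa [List.getD_eq_getElem _ _ ha, List.getD_eq_getElem _ _ hb]
  have hk12 : key p U1 < key p U2 := hpg (i+1) (i+2) hi1 hi2 (by omega)
  have hk02 : key p U0 < key p U2 := hpg i (i+2) hi0 hi2 (by omega)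
  have hhm21 : hm p U2 < hm p U1 := by
    rcases (key_lt_iff p hU1I hU2I).1 hk12 with h | ⟨h, h2⟩
    · exact h
    · omega
  have hU2min : hm p U2 = U2 := by
    by_contra hne
    have hlt : hm p U2 < U2 := lt_of_le_of_ne (hm_le p hU2I) hne
    set m' := hm p U2 with hm'
    have hm'u : m' ∈ u := hclos U2 hU2m
    have hm'I : m' ∈ Finset.Icc 1 n := hm_mem_Icc p hU2I
    obtain ⟨j, hj, hjv⟩ := List.getElem_of_mem hm'u
    have hjv' : u.getD j 0 = m' := by rw [List.getD_eq_getElem _ _ hj, hjv]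
    have hidem : hm p m' = hm p U2 := hm_idem p hU2I
    have hk1 : key p U1 < key p m' := (key_lt_iff p hU1I hm'I).2 (Or.inl (by omega))
    have hk2 : key p m' < key p U2 := (key_lt_iff p hm'I hU2I).2 (Or.inr ⟨hidem, hlt⟩)
    have hj1 : i + 1 < j := pos_lt_of_pairwise p hup hi1 hj (by rw [hjv']; exact hk1)
    have hj2 : j < i + 2 := pos_lt_of_pairwise p hup hj hi2 (by rw [hjv']; exact hk2)
    omega
  have hm0le : hm p U0 ≤ U0 := hm_le p hU0I
  rcases (key_lt_iff p hU0I hU2I).1 hk02 with h | ⟨h, h2⟩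
  · omega
  · omega

noncomputable def permOf (p : Finpartition (Finset.Icc 1 n)) : Equiv.Perm (Fin n) := by
  have hf : ∀ i : Fin n, wv p i - 1 < n := by
    intro i
    have := wv_mem p i.2
    rw [Finset.mem_Icc] at this
    omega
  exact Equiv.ofBijective (fun i => ⟨wv p i - 1, hf i⟩)
    (Finite.injective_iff_bijective.1 (by
      intro i j h
      simp only [Fin.mk.injEq] at h
      have hi := one_le_wv p i.2
      have hj := one_le_wv p j.2
      have : wv p i = wv p j := by omega
      exact Fin.ext (wv_inj p i.2 j.2 this)))

lemma permWord_permOf : permWord (permOf p) = wp p := by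
  apply List.ext_getElem
  · rw [wp_length]
    simp [permWord]
  · intro i hi hi2
    simp only [permWord, List.getElem_ofFn]
    show ((permOf p) _ : ℕ) + 1 = _
    unfold permOf
    simp only [Equiv.ofBijective_apply]
    rw [wp_length] at hi2
    have h1 := one_le_wv p (show i < n by omega)
    have : wv p i = (wp p)[i] := by
      unfold wv
      rw [List.getD_eq_getElem _ _ (by rw [wp_length]; omega)]
    omega

lemma permOf_avoids : AvoidsSP [1, 3, 2] (permOf p) := by
  intro k
  rw [permWord_permOf]
  show ¬ containsPattern [1, 3, 2] ((wp p).filter (fun x => decide (x ≤ k)))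
  exact no132 p k

lemma filter_getD_aux (P : ℕ → Bool) :
    ∀ (w : List ℕ) (a : ℕ), a < w.length → P (w.getD a 0) = true →
    (w.filter P).getD ((w.take a).countP P) 0 = w.getD a 0 ∧
      (w.take a).countP P < (w.filter P).length := by
  intro w
  induction w with
  | nil => intro a ha; simp at ha
  | cons c t ih =>
    intro a ha hP
    cases a with
    | zero =>
      simp only [List.take_zero, List.countP_nil]
      simp only [List.getD_cons_zero] at hP ⊢
      rw [List.filter_cons, if_pos hP]
      exact ⟨rfl, by simp⟩
    | succ a =>
      simp only [List.getD_cons_succ] at hP ⊢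
      simp only [List.length_cons] at ha
      have := ih a (by omega) hP
      rw [List.take_succ_cons, List.countP_cons, List.filter_cons]
      by_cases hc : P c = true
      · rw [if_pos hc]
        have h1 : (if P c = true then 1 else 0) = 1 := by simp [hc]
        rw [h1]
        constructor
        · rw [List.getD_cons_succ]
          exact this.1
        · simp only [List.length_cons]
          omega
      · rw [if_neg hc]
        have hc' : (if P c = true then 1 else 0) = 0 := by simp [hc]
        rw [hc', Nat.add_zero]
        exact this

lemma countP_take_succ (P : ℕ → Bool) :
    ∀ (w : List ℕ) (a : ℕ), a < w.length →
    (w.take (a + 1)).countP P =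
      (w.take a).countP P + (if P (w.getD a 0) = true then 1 else 0) := by
  intro w
  induction w with
  | nil => intro a ha; simp at ha
  | cons c t ih =>
    intro a ha
    cases a with
    | zero => simp [List.countP_cons, Nat.add_comm]
    | succ a =>
      simp only [List.length_cons] at ha
      rw [List.take_succ_cons, List.take_succ_cons, List.countP_cons, List.countP_cons,
        ih a (by omega), List.getD_cons_succ]
      omega

lemma countP_take_between (P : ℕ → Bool) (w : List ℕ) (a : ℕ) :
    ∀ (b : ℕ), a ≤ b → b ≤ w.length →
    (∀ t, a ≤ t → t < b → P (w.getD t 0) = false) →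
    (w.take b).countP P = (w.take a).countP P := by
  intro b
  induction b with
  | zero =>
    intro hab _ _
    have ha0 : a = 0 := Nat.le_zero.mp hab
    subst ha0
    rfl
  | succ b ih =>
    intro hab hb hno
    rcases Nat.lt_or_ge a (b + 1) with h | h
    · have hab' : a ≤ b := by omega
      rw [countP_take_succ P w b (by omega)]
      have h0 : P (w.getD b 0) = false := hno b hab' (by omega)
      rw [h0]
      simp only [Bool.false_eq_true, if_false, Nat.add_zero]
      exact ih hab' (by omega) (fun t ht1 ht2 => hno t ht1 (by omega))
    · have : a = b + 1 := by omega
      rw [this]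

noncomputable def wvw (π : Equiv.Perm (Fin n)) (i : ℕ) : ℕ := (permWord π).getD i 0

lemma permWord_length (π : Equiv.Perm (Fin n)) : (permWord π).length = n := by
  simp [permWord]

lemma wvw_eq (π : Equiv.Perm (Fin n)) {i : ℕ} (hi : i < n) :
    wvw π i = (π ⟨i, hi⟩ : ℕ) + 1 := by
  unfold wvw permWord
  rw [List.getD_eq_getElem _ _ (by simpa using hi)]
  simp

lemma wvw_mem (π : Equiv.Perm (Fin n)) {i : ℕ} (hi : i < n) :
    wvw π i ∈ Finset.Icc 1 n := by
  rw [wvw_eq π hi, Finset.mem_Icc]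
  have := (π ⟨i, hi⟩).2
  omega

lemma wvw_inj (π : Equiv.Perm (Fin n)) {i j : ℕ} (hi : i < n) (hj : j < n)
    (h : wvw π i = wvw π j) : i = j := by
  rw [wvw_eq π hi, wvw_eq π hj] at h
  have : (π ⟨i, hi⟩ : ℕ) = (π ⟨j, hj⟩ : ℕ) := by omega
  have := π.injective (Fin.ext this)
  exact Fin.mk.injEq .. ▸ (by injection this)

lemma wvw_surj (π : Equiv.Perm (Fin n)) {x : ℕ} (hx : x ∈ Finset.Icc 1 n) :
    ∃ i, i < n ∧ wvw π i = x := by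
  rw [Finset.mem_Icc] at hx
  have hx1 : x - 1 < n := by omega
  set f := π.symm ⟨x - 1, hx1⟩ with hfd
  refine ⟨f.1, f.2, ?_⟩
  rw [wvw_eq π f.2]
  have he : (⟨f.1, f.2⟩ : Fin n) = f := rfl
  rw [he, hfd, Equiv.apply_symm_apply]
  show x - 1 + 1 = x
  omega

lemma L_of_avoids {π : Equiv.Perm (Fin n)} (hav : AvoidsSP [1, 3, 2] π)
    {j i : ℕ} (hji : j ≤ i) (hi1 : i + 1 < n)
    (hdes : wvw π (i + 1) < wvw π i) : wvw π (i + 1) < wvw π j := by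
  by_contra hcon
  push_neg at hcon
  have hne : wvw π j ≠ wvw π (i + 1) := fun h => by
    have := wvw_inj π (by omega) hi1 h
    omega
  set x := wvw π (i + 1) with hxd
  have hjx : wvw π j < x := lt_of_le_of_ne hcon hne
  have hSne : ((Finset.range (i + 1)).filter (fun t => wvw π t < x)).Nonempty :=
    ⟨j, Finset.mem_filter.2 ⟨Finset.mem_range.2 (by omega), hjx⟩⟩
  set js := ((Finset.range (i + 1)).filter (fun t => wvw π t < x)).max' hSne with hjsd
  have hjsS : js ∈ (Finset.range (i + 1)).filter (fun t => wvw π t < x) :=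
    Finset.max'_mem _ hSne
  rw [Finset.mem_filter, Finset.mem_range] at hjsS
  obtain ⟨hjsi1, hjslt⟩ := hjsS
  have hgt : ∀ t, js < t → t ≤ i → x < wvw π t := by
    intro t h1 h2
    have hnotS : ¬ (wvw π t < x) := by
      intro hlt
      have hmem : t ∈ (Finset.range (i + 1)).filter (fun t => wvw π t < x) :=
        Finset.mem_filter.2 ⟨Finset.mem_range.2 (by omega), hlt⟩
      have := Finset.le_max' _ t hmem
      omega
    have hne2 : wvw π t ≠ x := fun h => by
      have := wvw_inj π (by omega) hi1 h
      omega
    omega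
  have hjsi : js < i := by
    rcases Nat.lt_or_ge js i with h | h
    · exact h
    · exfalso
      have : js = i := by omega
      rw [this] at hjslt
      omega
  have hTne : (Finset.Icc (js + 1) i).Nonempty := ⟨i, Finset.mem_Icc.2 ⟨by omega, le_refl i⟩⟩
  obtain ⟨m, hmT, hmmin⟩ := (Finset.Icc (js + 1) i).exists_min_image (fun t => wvw π t) hTne
  rw [Finset.mem_Icc] at hmT
  set k := wvw π m with hkd
  have hxk : x < k := hgt m (by omega) (by omega)
  apply hav k
  set P : ℕ → Bool := fun z => decide (z ≤ k) with hPd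
  set w := permWord π with hwd
  have hlen : w.length = n := permWord_length π
  have hgetD : ∀ t, w.getD t 0 = wvw π t := fun t => rfl
  have hPjs : P (w.getD js 0) = true := by
    rw [hgetD, hPd]
    simp only [decide_eq_true_iff]
    omega
  have hPm : P (w.getD m 0) = true := by
    rw [hgetD, hPd]
    simp only [decide_eq_true_iff]
    exact le_of_eq hkd.symm
  have hPx : P (w.getD (i + 1) 0) = true := by
    rw [hgetD, hPd]
    simp only [decide_eq_true_iff]
    omega
  have hmid1 : ∀ t, js + 1 ≤ t → t < m → P (w.getD t 0) = false := by
    intro t h1 h2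
    rw [hgetD, hPd]
    simp only [decide_eq_false_iff_not, not_le]
    have hge : k ≤ wvw π t := hmmin t (Finset.mem_Icc.2 ⟨by omega, by omega⟩)
    have hne2 : wvw π t ≠ k := fun h => by
      have := wvw_inj π (by omega) (by omega) h
      omega
    omega
  have hmid2 : ∀ t, m + 1 ≤ t → t < i + 1 → P (w.getD t 0) = false := by
    intro t h1 h2
    rw [hgetD, hPd]
    simp only [decide_eq_false_iff_not, not_le]
    have hge : k ≤ wvw π t := hmmin t (Finset.mem_Icc.2 ⟨by omega, by omega⟩)
    have hne2 : wvw π t ≠ k := fun h => by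
      have := wvw_inj π (by omega) (by omega) h
      omega
    omega
  set t0 := (w.take js).countP P with ht0d
  have e1 : (w.take m).countP P = t0 + 1 := by
    rw [countP_take_between P w (js + 1) m (by omega) (by omega) hmid1,
      countP_take_succ P w js (by omega), hPjs]
    simp [ht0d]
  have e2 : (w.take (i + 1)).countP P = t0 + 2 := by
    rw [countP_take_between P w (m + 1) (i + 1) (by omega) (by omega) hmid2,
      countP_take_succ P w m (by omega), hPm, e1]
    simp
  obtain ⟨g0, _⟩ := filter_getD_aux P w js (by omega) hPjs
  obtain ⟨g1, _⟩ := filter_getD_aux P w m (by omega) hPm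
  obtain ⟨g2, glen⟩ := filter_getD_aux P w (i + 1) (by omega) hPx
  rw [e1] at g1
  rw [e2] at g2 glen
  have hresf : restrict (permWord π) k = w.filter P := rfl
  refine ⟨t0, ?_, ?_⟩
  · rw [hresf]
    show t0 + 3 ≤ (w.filter P).length
    omega
  · intro a ha b hb
    have hu0 : (restrict (permWord π) k).getD (t0 + 0) 0 = wvw π js := by
      rw [hresf, Nat.add_zero, ht0d]
      exact g0
    have hu1 : (restrict (permWord π) k).getD (t0 + 1) 0 = k := by
      rw [hresf]
      exact g1
    have hu2 : (restrict (permWord π) k).getD (t0 + 2) 0 = x := by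
      rw [hresf]
      exact g2
    have hτ0 : ([1, 3, 2] : List ℕ).getD 0 0 = 1 := rfl
    have hτ1 : ([1, 3, 2] : List ℕ).getD 1 0 = 3 := rfl
    have hτ2 : ([1, 3, 2] : List ℕ).getD 2 0 = 2 := rfl
    have hτl : ([1, 3, 2] : List ℕ).length = 3 := rfl
    rw [hτl] at ha hb
    interval_cases a <;> interval_cases b <;>
      simp only [hwd, hτ0, hτ1, hτ2, hu0, hu1, hu2] <;> omega

noncomputable def posOf (π : Equiv.Perm (Fin n)) (x : ℕ) : ℕ :=
  if hx : x ∈ Finset.Icc 1 n then (wvw_surj π hx).choose else 0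

lemma posOf_spec (π : Equiv.Perm (Fin n)) {x : ℕ} (hx : x ∈ Finset.Icc 1 n) :
    posOf π x < n ∧ wvw π (posOf π x) = x := by
  unfold posOf
  rw [dif_pos hx]
  exact (wvw_surj π hx).choose_spec

lemma posOf_wvw (π : Equiv.Perm (Fin n)) {i : ℕ} (hi : i < n) :
    posOf π (wvw π i) = i := by
  obtain ⟨h1, h2⟩ := posOf_spec π (wvw_mem π hi)
  exact wvw_inj π h1 hi h2

def noDes (π : Equiv.Perm (Fin n)) (a b : ℕ) : Prop :=
  ∀ t, a ≤ t → t < b → ¬ (wvw π (t + 1) < wvw π t)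

def sr (π : Equiv.Perm (Fin n)) (x y : ℕ) : Prop :=
  noDes π (min (posOf π x) (posOf π y)) (max (posOf π x) (posOf π y))

noncomputable def cls (π : Equiv.Perm (Fin n)) (x : ℕ) : Finset ℕ :=
  (Finset.Icc 1 n).filter (sr π x)

lemma sr_refl (π : Equiv.Perm (Fin n)) (x : ℕ) : sr π x x := by
  intro t h1 h2
  omega

lemma sr_symm (π : Equiv.Perm (Fin n)) {x y : ℕ} (h : sr π x y) : sr π y x := by
  unfold sr at h ⊢
  rwa [min_comm, max_comm]

lemma sr_trans (π : Equiv.Perm (Fin n)) {x y z : ℕ} (h1 : sr π x y) (h2 : sr π y z) :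
    sr π x z := by
  intro t ht1 ht2
  by_cases h : min (posOf π x) (posOf π y) ≤ t ∧ t < max (posOf π x) (posOf π y)
  · exact h1 t h.1 h.2
  · exact h2 t (by omega) (by omega)

lemma cls_self (π : Equiv.Perm (Fin n)) {x : ℕ} (hx : x ∈ Finset.Icc 1 n) :
    x ∈ cls π x := Finset.mem_filter.2 ⟨hx, sr_refl π x⟩

lemma cls_eq_of_sr (π : Equiv.Perm (Fin n)) {x y : ℕ} (h : sr π x y) :
    cls π x = cls π y := by
  unfold cls
  apply Finset.filter_congr
  intro z _
  constructor
  · intro hz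
    exact sr_trans π (sr_symm π h) hz
  · intro hz
    exact sr_trans π h hz

noncomputable def part' (π : Equiv.Perm (Fin n)) : Finpartition (Finset.Icc 1 n) where
  parts := (Finset.Icc 1 n).image (cls π)
  supIndep := by
    rw [Finset.supIndep_iff_pairwiseDisjoint]
    intro B hB C hC hBC
    rw [Finset.coe_image, Set.mem_image] at hB hC
    obtain ⟨x, hx, rfl⟩ := hB
    obtain ⟨y, hy, rfl⟩ := hC
    rw [Function.onFun, Finset.disjoint_left]
    intro z hzB hzC
    rw [id_eq] at hzB hzC
    rw [cls, Finset.mem_filter] at hzB hzC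
    exact hBC (cls_eq_of_sr π (sr_trans π hzB.2 (sr_symm π hzC.2)))
  sup_parts := by
    apply le_antisymm
    · apply Finset.sup_le
      intro B hB
      rw [Finset.mem_image] at hB
      obtain ⟨x, hx, rfl⟩ := hB
      rw [id_eq]
      exact Finset.filter_subset _ _
    · intro z hz
      rw [Finset.mem_sup]
      refine ⟨cls π z, Finset.mem_image.2 ⟨z, by exact_mod_cast hz, rfl⟩, ?_⟩
      rw [id_eq]
      exact cls_self π (by exact_mod_cast hz)
  bot_notMem := by
    intro h
    rw [Finset.mem_image] at h
    obtain ⟨x, hx, hcls⟩ := h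
    have := cls_self π hx
    rw [hcls] at this
    exact Finset.notMem_empty x this

lemma part'_part (π : Equiv.Perm (Fin n)) {x : ℕ} (hx : x ∈ Finset.Icc 1 n) :
    (part' π).part x = cls π x :=
  (part' π).part_eq_of_mem (Finset.mem_image.2 ⟨x, hx, rfl⟩) (cls_self π hx)

lemma run_mono (π : Equiv.Perm (Fin n)) :
    ∀ d i : ℕ, i + d < n → noDes π i (i + d) → wvw π i ≤ wvw π (i + d) := by
  intro d
  induction d with
  | zero => intro i _ _; exact le_refl _
  | succ d ih =>
    intro i hi hnd
    have h1 : wvw π i ≤ wvw π (i + d) :=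
      ih i (by omega) (fun t ht1 ht2 => hnd t ht1 (by omega))
    have h2 : ¬ (wvw π (i + d + 1) < wvw π (i + d)) := hnd (i + d) (by omega) (by omega)
    rw [show i + (d + 1) = i + d + 1 by omega]
    omega

lemma run_strict (π : Equiv.Perm (Fin n)) {i j : ℕ} (hij : i < j) (hj : j < n)
    (hnd : noDes π i j) : wvw π i < wvw π j := by
  have h1 : wvw π i ≤ wvw π j := by
    have := run_mono π (j - i) i (by omega) (by
      intro t ht1 ht2
      exact hnd t ht1 (by omega))
    have he : i + (j - i) = j := by omega
    rwa [he] at this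
  have h2 : wvw π i ≠ wvw π j := fun h => by
    have := wvw_inj π (by omega) hj h
    omega
  omega

lemma sorted_key {π : Equiv.Perm (Fin n)} (hav : AvoidsSP [1, 3, 2] π)
    {i j : ℕ} (hij : i < j) (hj : j < n) :
    key (part' π) (wvw π i) < key (part' π) (wvw π j) := by
  set q := part' π with hqd
  have hiI : wvw π i ∈ Finset.Icc 1 n := wvw_mem π (by omega)
  have hjI : wvw π j ∈ Finset.Icc 1 n := wvw_mem π hj
  apply (key_lt_iff q hiI hjI).2
  by_cases hnd : noDes π i j
  · right
    constructor
    · show hm q (wvw π i) = hm q (wvw π j)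
      unfold hm
      rw [part'_part π hiI, part'_part π hjI]
      congr 1
      apply cls_eq_of_sr
      unfold sr
      rw [posOf_wvw π (by omega : i < n), posOf_wvw π hj,
        min_eq_left (by omega : i ≤ j), max_eq_right (by omega : i ≤ j)]
      exact hnd
    · exact run_strict π hij hj hnd
  · left
    unfold noDes at hnd
    push_neg at hnd
    obtain ⟨t₀, ht₀1, ht₀2, ht₀3⟩ := hnd
    have hDne : ((Finset.Icc i (j - 1)).filter (fun t => wvw π (t + 1) < wvw π t)).Nonempty :=
      ⟨t₀, Finset.mem_filter.2 ⟨Finset.mem_Icc.2 ⟨ht₀1, by omega⟩, ht₀3⟩⟩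
    set d := ((Finset.Icc i (j - 1)).filter (fun t => wvw π (t + 1) < wvw π t)).max' hDne
      with hdd
    have hdmem : d ∈ (Finset.Icc i (j - 1)).filter (fun t => wvw π (t + 1) < wvw π t) :=
      Finset.max'_mem _ hDne
    rw [Finset.mem_filter, Finset.mem_Icc] at hdmem
    obtain ⟨⟨hdi, hdj⟩, hddes⟩ := hdmem
    have hdmax : ∀ t, d < t → t < j → ¬ (wvw π (t + 1) < wvw π t) := by
      intro t h1 h2 h3
      have : t ∈ (Finset.Icc i (j - 1)).filter (fun t => wvw π (t + 1) < wvw π t) :=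
        Finset.mem_filter.2 ⟨Finset.mem_Icc.2 ⟨by omega, by omega⟩, h3⟩
      have := Finset.le_max' _ t this
      omega
    have hd1n : d + 1 < n := by omega
    have hd1I : wvw π (d + 1) ∈ Finset.Icc 1 n := wvw_mem π hd1n
    -- wvw (d+1) belongs to the class of wvw j
    have hsrj : sr π (wvw π j) (wvw π (d + 1)) := by
      unfold sr
      rw [posOf_wvw π hj, posOf_wvw π hd1n,
        min_eq_right (by omega : d + 1 ≤ j), max_eq_left (by omega : d + 1 ≤ j)]
      intro t h1 h2
      exact hdmax t (by omega) (by omega)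
    have hmem : wvw π (d + 1) ∈ cls π (wvw π j) :=
      Finset.mem_filter.2 ⟨hd1I, hsrj⟩
    have hminj : hm q (wvw π j) ≤ wvw π (d + 1) := by
      show bmin (q.part (wvw π j)) ≤ _
      rw [part'_part π hjI]
      exact bmin_le hmem
    -- every element of the class of wvw i is bigger than wvw (d+1)
    have hbig : ∀ y ∈ cls π (wvw π i), wvw π (d + 1) < y := by
      intro y hy
      rw [cls, Finset.mem_filter] at hy
      obtain ⟨hyI, hsry⟩ := hy
      obtain ⟨hpy, hpyv⟩ := posOf_spec π hyI
      have hti : posOf π (wvw π i) = i := posOf_wvw π (by omega)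
      have hty : posOf π y ≤ d := by
        by_contra hc
        push_neg at hc
        unfold sr at hsry
        rw [hti] at hsry
        exact hsry d (by omega) (by omega) hddes
      have := L_of_avoids hav (j := posOf π y) (i := d) hty hd1n hddes
      rwa [hpyv] at this
    have hminI : hm q (wvw π i) ∈ cls π (wvw π i) := by
      have := hm_mem q hiI
      rwa [part'_part π hiI] at this
    exact lt_of_le_of_lt hminj (hbig _ hminI)

lemma mem_permWord {π : Equiv.Perm (Fin n)} {z : ℕ} :
    z ∈ permWord π ↔ z ∈ Finset.Icc 1 n := by
  constructor
  · intro hz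
    obtain ⟨i, hi, hiv⟩ := List.getElem_of_mem hz
    rw [permWord_length] at hi
    have : wvw π i = z := by
      unfold wvw
      rw [List.getD_eq_getElem _ _ (by rw [permWord_length]; exact hi), hiv]
    exact this ▸ wvw_mem π hi
  · intro hz
    obtain ⟨i, hi, hiv⟩ := wvw_surj π hz
    rw [← hiv]
    unfold wvw
    rw [List.getD_eq_getElem _ _ (by rw [permWord_length]; exact hi)]
    exact List.getElem_mem _

lemma permWord_nodup (π : Equiv.Perm (Fin n)) : (permWord π).Nodup := by
  rw [List.nodup_iff_injective_getElem]
  intro ⟨a, ha⟩ ⟨b, hb⟩ hab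
  rw [permWord_length] at ha hb
  have ha' : wvw π a = (permWord π)[a] := by
    unfold wvw; rw [List.getD_eq_getElem _ _ (by rw [permWord_length]; exact ha)]
  have hb' : wvw π b = (permWord π)[b] := by
    unfold wvw; rw [List.getD_eq_getElem _ _ (by rw [permWord_length]; exact hb)]
  have hab' : (permWord π)[a] = (permWord π)[b] := hab
  simp only [Fin.mk.injEq]
  exact wvw_inj π ha hb (by rw [ha', hb', hab'])

lemma wp_nodup : (wp p).Nodup := by
  apply (wp_pairwise p).imp
  intro a b hab h
  rw [h] at hab
  omega

lemma wp_part'_eq {π : Equiv.Perm (Fin n)} (hav : AvoidsSP [1, 3, 2] π) :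
    wp (part' π) = permWord π := by
  set q := part' π with hqd
  set r : ℕ → ℕ → Prop := fun x y => key q x < key q y with hrd
  haveI : Std.Antisymm r := ⟨fun a b h1 h2 => absurd (h1.trans h2) (lt_irrefl _)⟩
  refine (fun hp h1 h2 => List.Perm.eq_of_pairwise' (r := r) h1 h2 hp) ?_ ?_ ?_
  · apply List.perm_of_nodup_nodup_toFinset_eq (wp_nodup q) (permWord_nodup π)
    apply Finset.ext
    intro z
    rw [List.mem_toFinset, List.mem_toFinset, mem_wp, mem_permWord]
  · exact wp_pairwise q
  · rw [List.pairwise_iff_getElem]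
    intro a b ha hb hab
    rw [permWord_length] at ha hb
    have ha' : (permWord π)[a] = wvw π a := by
      unfold wvw; rw [List.getD_eq_getElem _ _ (by rw [permWord_length]; exact ha)]
    have hb' : (permWord π)[b] = wvw π b := by
      unfold wvw; rw [List.getD_eq_getElem _ _ (by rw [permWord_length]; exact hb)]
    rw [ha', hb']
    exact sorted_key hav hab hb

lemma permOf_part' {π : Equiv.Perm (Fin n)} (hav : AvoidsSP [1, 3, 2] π) :
    permOf (part' π) = π := by
  have h := permWord_permOf (part' π)
  rw [wp_part'_eq hav] at h
  apply Equiv.ext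
  intro i
  have h2 : wvw (permOf (part' π)) i.1 = wvw π i.1 := by
    unfold wvw
    rw [h]
  rw [wvw_eq _ i.2, wvw_eq _ i.2] at h2
  apply Fin.ext
  have he : (⟨i.1, i.2⟩ : Fin n) = i := rfl
  rw [he] at h2
  omega

lemma isMin_hm_eq {x : ℕ} (hx : x ∈ Finset.Icc 1 n) :
    IsMinB p x ↔ hm p x = x := by
  constructor
  · intro h
    have h1 : hm p x ≤ x := hm_le p hx
    have h2 : x ≤ hm p x := h _ (hm_mem p hx)
    omega
  · intro h y hy
    have := bmin_le hy
    show x ≤ y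
    unfold hm at h
    omega

lemma hm_prev {i : ℕ} (hi : i < n) (h1 : 1 ≤ i) (hmin : ¬ IsMinB p (wv p i)) :
    hm p (wv p i) = hm p (wv p (i - 1)) := by
  set x := wv p i with hxd
  have hx : x ∈ Finset.Icc 1 n := wv_mem p hi
  have hmlt : hm p x < x := by
    have := hm_le p hx
    rcases lt_or_eq_of_le this with h | h
    · exact h
    · exact absurd ((isMin_hm_eq p hx).2 h) hmin
  set m' := hm p x with hm'd
  have hm'I : m' ∈ Finset.Icc 1 n := hm_mem_Icc p hx
  have hk1 : key p m' < key p x := (key_lt_iff p hm'I hx).2 (Or.inr ⟨hm_idem p hx, hmlt⟩)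
  obtain ⟨jm, hjm, hjmv⟩ := exists_wv p hm'I
  have hjmi : jm < i := pos_lt_of_key_lt p hjm hi (by rw [hjmv]; exact hk1)
  set y' := wv p (i - 1) with hy'd
  have hy'I : y' ∈ Finset.Icc 1 n := wv_mem p (by omega)
  have hky' : key p y' < key p x := by
    have := key_wv_lt p (show i - 1 < i by omega) hi
    simpa using this
  have hkm'y' : key p m' ≤ key p y' := by
    rcases Nat.lt_or_ge jm (i - 1) with h | h
    · exact le_of_lt (by rw [← hjmv]; exact key_wv_lt p h (by omega))
    · have : jm = i - 1 := by omega
      rw [← hjmv, this]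
  rcases (key_lt_iff p hy'I hx).1 hky' with h | ⟨h, h2⟩
  · exfalso
    have : key p y' < key p m' :=
      (key_lt_iff p hy'I hm'I).2 (Or.inl (by rw [hm_idem p hx]; omega))
    omega
  · exact h.symm

lemma wp_injective {p q : Finpartition (Finset.Icc 1 n)} (h : wp p = wp q) : p = q := by
  have hwv : ∀ i, wv p i = wv q i := by
    intro i
    unfold wv
    rw [h]
  have hhm : ∀ i, i < n → hm p (wv p i) = hm q (wv p i) := by
    intro i
    induction i with
    | zero =>
      intro h0
      have hp : IsMinB p (wv p 0) := (min_iff p h0).1 (Or.inl rfl)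
      have hq : IsMinB q (wv q 0) := (min_iff q h0).1 (Or.inl rfl)
      rw [(isMin_hm_eq p (wv_mem p h0)).1 hp]
      rw [hwv 0] at *
      rw [(isMin_hm_eq q (wv_mem q h0)).1 hq]
    | succ i ih =>
      intro hi1
      by_cases hd : wv p (i + 1) < wv p ((i + 1) - 1)
      · have hp : IsMinB p (wv p (i + 1)) := (min_iff p hi1).1 (Or.inr hd)
        have hq : IsMinB q (wv q (i + 1)) := (min_iff q hi1).1 (Or.inr (by
          rw [← hwv (i + 1), ← hwv ((i + 1) - 1)]
          exact hd))
        rw [(isMin_hm_eq p (wv_mem p hi1)).1 hp]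
        rw [hwv (i + 1)] at *
        rw [(isMin_hm_eq q (wv_mem q hi1)).1 hq]
      · have hp : ¬ IsMinB p (wv p (i + 1)) := by
          intro hmin
          rcases (min_iff p hi1).2 hmin with h' | h'
          · omega
          · exact hd h'
        have hq : ¬ IsMinB q (wv q (i + 1)) := by
          intro hmin
          rcases (min_iff q hi1).2 hmin with h' | h'
          · omega
          · apply hd
            rw [hwv (i + 1), hwv ((i + 1) - 1)]
            exact h'
        have e1 := hm_prev p hi1 (by omega) hp
        have e2 := hm_prev q hi1 (by omega) hq
        have e3 := ih (by omega)
        rw [show i + 1 - 1 = i from rfl] at e1 e2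
        rw [hwv (i + 1)] at e1 ⊢
        rw [e1, e2, ← hwv i]
        rw [e3, hwv i]
  have hhm' : ∀ x ∈ Finset.Icc 1 n, hm p x = hm q x := by
    intro x hx
    obtain ⟨i, hi, rfl⟩ := exists_wv p hx
    exact hhm i hi
  have hpart_eq : ∀ P : Finpartition (Finset.Icc 1 n), ∀ x ∈ Finset.Icc 1 n,
      P.part x = (Finset.Icc 1 n).filter (fun y => hm P y = hm P x) := by
    intro P x hx
    apply Finset.ext
    intro y
    rw [Finset.mem_filter]
    constructor
    · intro hy
      exact ⟨mem_part_icc P hx hy, hm_eq_of_mem_part P hx hy⟩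
    · rintro ⟨hyI, hyhm⟩
      rw [← (part_eq_iff_hm_eq P hyI hx).2 hyhm]
      exact P.mem_part hyI
  have hparts : ∀ P : Finpartition (Finset.Icc 1 n),
      P.parts = (Finset.Icc 1 n).image (fun x => P.part x) := by
    intro P
    apply Finset.ext
    intro B
    rw [Finset.mem_image]
    constructor
    · intro hB
      obtain ⟨x, hx⟩ := P.nonempty_of_mem_parts hB
      exact ⟨x, P.le hB hx, P.part_eq_of_mem hB hx⟩
    · rintro ⟨x, hx, rfl⟩
      exact P.part_mem.2 hx
  apply Finpartition.ext
  rw [hparts p, hparts q]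
  apply Finset.image_congr
  intro x hx
  rw [Finset.mem_coe] at hx
  show p.part x = q.part x
  rw [hpart_eq p x hx, hpart_eq q x hx]
  apply Finset.filter_congr
  intro y hy
  rw [hhm' y hy, hhm' x hx]

end SP10

/-- for `n ≥ 1` and all `a, b, c, d ≥ 0`, the number of
`π ∈ SP_n(132)` with `des(π)+1 = a`, `rpk(π) = b`, `exddes(π) = c`, `inv(π) = d`
equals the number of set partitions `p` of `[n]` with `block(p) = a`,
`nsingleton(p) = b`, `singleton(p) = c`, `fr(p) = d`. -/
theorem stmt10 (n a b c d : ℕ) (hn : 1 ≤ n) :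
    {π : Equiv.Perm (Fin n) | AvoidsSP [1, 3, 2] π ∧
      desList (permWord π) + 1 = a ∧ rpkList (permWord π) = b ∧
      exddesList (permWord π) = c ∧ invList (permWord π) = d}.ncard =
    {p : Finpartition (Finset.Icc 1 n) | p.parts.card = a ∧
      nsingletonCount p = b ∧ singletonCount p = c ∧ frCount p = d}.ncard := by
  have himg : {π : Equiv.Perm (Fin n) | AvoidsSP [1, 3, 2] π ∧
      desList (permWord π) + 1 = a ∧ rpkList (permWord π) = b ∧
      exddesList (permWord π) = c ∧ invList (permWord π) = d} =
      SP10.permOf '' {p : Finpartition (Finset.Icc 1 n) | p.parts.card = a ∧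
      nsingletonCount p = b ∧ singletonCount p = c ∧ frCount p = d} := by
    ext π
    simp only [Set.mem_setOf_eq, Set.mem_image]
    constructor
    · rintro ⟨hav, h1, h2, h3, h4⟩
      refine ⟨SP10.part' π, ⟨?_, ?_, ?_, ?_⟩, SP10.permOf_part' hav⟩
      · rw [← SP10.desList_wp (SP10.part' π) hn, SP10.wp_part'_eq hav]
        exact h1
      · rw [← SP10.rpkList_wp (SP10.part' π), SP10.wp_part'_eq hav]
        exact h2
      · rw [← SP10.exddesList_wp (SP10.part' π), SP10.wp_part'_eq hav]
        exact h3
      · rw [← SP10.invList_wp (SP10.part' π), SP10.wp_part'_eq hav]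
        exact h4
    · rintro ⟨q, ⟨h1, h2, h3, h4⟩, rfl⟩
      refine ⟨SP10.permOf_avoids q, ?_, ?_, ?_, ?_⟩
      · rw [SP10.permWord_permOf, SP10.desList_wp q hn]
        exact h1
      · rw [SP10.permWord_permOf, SP10.rpkList_wp q]
        exact h2
      · rw [SP10.permWord_permOf, SP10.exddesList_wp q]
        exact h3
      · rw [SP10.permWord_permOf, SP10.invList_wp q]
        exact h4
  rw [himg]
  apply Set.ncard_image_of_injOn
  intro p1 _ p2 _ he
  apply SP10.wp_injective
  rw [← SP10.permWord_permOf p1, ← SP10.permWord_permOf p2, he]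
end

section
/- For all n ≥ 1 and all k ≥ 1 and ℓ ≥ 0, the number of permutations π ∈ SP_n(132) with des(π) = k−1 and inv(π) = ℓ equals the number of set partitions of [n] with exactly k blocks and exactly ℓ free rises. -/
open scoped Classical

namespace Stmt11

variable {n : ℕ}

/-! ### Basic word facts -/

def wv (π : Equiv.Perm (Fin n)) (i : Fin n) : ℕ := (π i : ℕ) + 1

lemma permWord_length (π : Equiv.Perm (Fin n)) : (permWord π).length = n := by
  simp [permWord]

lemma permWord_getD (π : Equiv.Perm (Fin n)) {i : ℕ} (hi : i < n) :
    (permWord π).getD i 0 = wv π ⟨i, hi⟩ := by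
  rw [List.getD_eq_getElem _ _ (by simpa [permWord_length] using hi)]
  simp [permWord, wv]

lemma wv_injective (π : Equiv.Perm (Fin n)) : Function.Injective (wv π) := by
  intro i j h
  have : π i = π j := by
    have := Nat.add_right_cancel h
    exact Fin.ext this
  exact π.injective this

lemma wv_mem (π : Equiv.Perm (Fin n)) (i : Fin n) : wv π i ∈ Finset.Icc 1 n := by
  simp [wv, Finset.mem_Icc]

lemma wv_surj (π : Equiv.Perm (Fin n)) {x : ℕ} (hx : x ∈ Finset.Icc 1 n) :
    ∃ i, wv π i = x := by
  rw [Finset.mem_Icc] at hx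
  refine ⟨π.symm ⟨x - 1, by omega⟩, ?_⟩
  simp [wv]
  omega

/-! ### bmin facts -/

lemma bmin_mem {B : Finset ℕ} (hB : B.Nonempty) : bmin B ∈ B := by
  have : (B : Set ℕ).Nonempty := by exact_mod_cast hB
  simpa [bmin] using Nat.sInf_mem this

lemma bmin_le {B : Finset ℕ} {x : ℕ} (hx : x ∈ B) : bmin B ≤ x :=
  Nat.sInf_le (by simpa using hx)

variable (p : Finpartition (Finset.Icc 1 n))

lemma part_nonempty {x : ℕ} (hx : x ∈ Finset.Icc 1 n) : (p.part x).Nonempty :=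
  ⟨x, p.mem_part hx⟩

lemma part_subset {x : ℕ} (hx : x ∈ Finset.Icc 1 n) : p.part x ⊆ Finset.Icc 1 n :=
  p.le (p.part_mem.2 hx)

lemma bmin_part_mem {x : ℕ} (hx : x ∈ Finset.Icc 1 n) : bmin (p.part x) ∈ p.part x :=
  bmin_mem (part_nonempty p hx)

lemma bmin_part_bounds {x : ℕ} (hx : x ∈ Finset.Icc 1 n) :
    1 ≤ bmin (p.part x) ∧ bmin (p.part x) ≤ x := by
  constructor
  · have := part_subset p hx (bmin_part_mem p hx)
    exact (Finset.mem_Icc.1 this).1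
  · exact bmin_le (p.mem_part hx)

lemma part_eq_of_bmin_eq {x y : ℕ} (hx : x ∈ Finset.Icc 1 n) (hy : y ∈ Finset.Icc 1 n)
    (h : bmin (p.part x) = bmin (p.part y)) : p.part x = p.part y := by
  refine p.eq_of_mem_parts (p.part_mem.2 hx) (p.part_mem.2 hy) (bmin_part_mem p hx) ?_
  rw [h]; exact bmin_part_mem p hy

/-! ### The key function and the map F -/

noncomputable def pkey (x : ℕ) : ℕ := (n - bmin (p.part x)) * (n + 1) + x

lemma lex_lt {a b x y N : ℕ} (hx : x ≤ N) (hy : y ≤ N) :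
    a * (N + 1) + x < b * (N + 1) + y ↔ a < b ∨ (a = b ∧ x < y) := by
  rcases lt_trichotomy a b with h | h | h
  · have h2 : (a + 1) * (N + 1) ≤ b * (N + 1) := Nat.mul_le_mul_right _ h
    rw [add_one_mul] at h2
    constructor
    · intro _; exact Or.inl h
    · intro _; omega
  · subst h; constructor
    · intro h3; exact Or.inr ⟨rfl, by omega⟩
    · rintro (h3 | ⟨-, h3⟩) <;> omega
  · have h2 : (b + 1) * (N + 1) ≤ a * (N + 1) := Nat.mul_le_mul_right _ h
    rw [add_one_mul] at h2
    constructor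
    · intro _; omega
    · rintro (h3 | ⟨h3, -⟩) <;> omega

lemma pkey_lt_pkey {x y : ℕ} (hx : x ∈ Finset.Icc 1 n) (hy : y ∈ Finset.Icc 1 n) :
    pkey p x < pkey p y ↔
      bmin (p.part y) < bmin (p.part x) ∨ (bmin (p.part x) = bmin (p.part y) ∧ x < y) := by
  rw [Finset.mem_Icc] at hx hy
  have bx := bmin_part_bounds p (by rw [Finset.mem_Icc]; exact hx)
  have by' := bmin_part_bounds p (by rw [Finset.mem_Icc]; exact hy)
  rw [pkey, pkey, lex_lt (by omega) (by omega)]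
  constructor
  · rintro (h | ⟨h, h2⟩)
    · left; omega
    · right; exact ⟨by omega, h2⟩
  · rintro (h | ⟨h, h2⟩)
    · left; omega
    · right; exact ⟨by omega, h2⟩

noncomputable def keyf : Fin n → ℕ := fun j => pkey p ((j : ℕ) + 1)

lemma pkey_injOn {x y : ℕ} (hx : x ∈ Finset.Icc 1 n) (hy : y ∈ Finset.Icc 1 n)
    (h : pkey p x = pkey p y) : x = y := by
  rw [Finset.mem_Icc] at hx hy
  have h1 : pkey p x % (n + 1) = x := by
    rw [pkey, Nat.mul_comm, Nat.mul_add_mod]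
    exact Nat.mod_eq_of_lt (by omega)
  have h2 : pkey p y % (n + 1) = y := by
    rw [pkey, Nat.mul_comm, Nat.mul_add_mod]
    exact Nat.mod_eq_of_lt (by omega)
  rw [← h1, ← h2, h]

lemma keyf_injective : Function.Injective (keyf p) := by
  intro i j h
  have hi : ((i : ℕ) + 1) ∈ Finset.Icc 1 n := by
    rw [Finset.mem_Icc]; exact ⟨by omega, i.isLt⟩
  have hj : ((j : ℕ) + 1) ∈ Finset.Icc 1 n := by
    rw [Finset.mem_Icc]; exact ⟨by omega, j.isLt⟩
  have := pkey_injOn p hi hj h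
  exact Fin.ext (by omega)

noncomputable def F : Equiv.Perm (Fin n) := Tuple.sort (keyf p)

lemma strictMono_key_F : StrictMono (fun i => pkey p (wv (F p) i)) := by
  have m : Monotone (keyf p ∘ Tuple.sort (keyf p)) := Tuple.monotone_sort (keyf p)
  have : (fun i => pkey p (wv (F p) i)) = keyf p ∘ Tuple.sort (keyf p) := by
    funext i; simp [keyf, wv, F]
  rw [this]
  exact m.strictMono_of_injective ((keyf_injective p).comp (Tuple.sort (keyf p)).injective)

/-! ### Structure of the word of `F p` -/

noncomputable def W : Fin n → ℕ := wv (F p)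

noncomputable def M (i : Fin n) : ℕ := bmin (p.part (W p i))

lemma W_mem (i : Fin n) : W p i ∈ Finset.Icc 1 n := wv_mem _ i

lemma W_inj : Function.Injective (W p) := wv_injective _

lemma W_surj {x : ℕ} (hx : x ∈ Finset.Icc 1 n) : ∃ i, W p i = x := wv_surj _ hx

lemma M_le_W (i : Fin n) : M p i ≤ W p i := bmin_le (p.mem_part (W_mem p i))

lemma one_le_M (i : Fin n) : 1 ≤ M p i := (bmin_part_bounds p (W_mem p i)).1

lemma part_eq_iff_M_eq {i j : Fin n} :
    p.part (W p i) = p.part (W p j) ↔ M p i = M p j := by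
  constructor
  · intro h; simp [M, h]
  · intro h; exact part_eq_of_bmin_eq p (W_mem p i) (W_mem p j) h

/-- (A): the fundamental ordering property of the word of `F p`. -/
lemma key_order {i j : Fin n} (hij : i < j) :
    M p j < M p i ∨ (M p i = M p j ∧ W p i < W p j) := by
  have h := strictMono_key_F p hij
  have := (pkey_lt_pkey p (W_mem p i) (W_mem p j)).1 h
  exact this

lemma M_antitone {i j : Fin n} (hij : i ≤ j) : M p j ≤ M p i := by
  rcases eq_or_lt_of_le hij with h | h
  · exact le_of_eq (by rw [h])
  · rcases key_order p h with h2 | ⟨h2, -⟩ <;> omega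

/-- (C0): if the `M`-value at `j` is new, then `W j` is the minimum of its block. -/
lemma starts_min {j : Fin n} (h : ∀ i : Fin n, i < j → M p i ≠ M p j) :
    W p j = M p j := by
  have hmem : bmin (p.part (W p j)) ∈ p.part (W p j) := bmin_part_mem p (W_mem p j)
  have hI : bmin (p.part (W p j)) ∈ Finset.Icc 1 n := part_subset p (W_mem p j) hmem
  obtain ⟨t, ht⟩ := W_surj p hI
  have hpart : p.part (W p t) = p.part (W p j) := by
    rw [ht]
    exact p.part_eq_of_mem (p.part_mem.2 (W_mem p j)) hmem
  have hM : M p t = M p j := by simp [M, hpart]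
  rcases lt_trichotomy t j with h2 | h2 | h2
  · exact absurd hM (h t h2)
  · subst h2; rw [M]; exact ht
  · rcases key_order p h2 with h3 | ⟨-, h3⟩
    · omega
    · have : W p t ≤ W p j := by rw [ht]; exact M_le_W p j
      omega

/-- At a place where `M` strictly drops between consecutive positions, the new entry
is below everything before. -/
lemma desc_strong {i j : Fin n} (hij : (i : ℕ) + 1 = (j : ℕ)) (hd : M p j < M p i) :
    ∀ t : Fin n, t ≤ i → W p j < W p t := by
  have hstart : W p j = M p j := by
    apply starts_min
    intro t ht
    have ht' : t ≤ i := by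
      have := ht; rw [Fin.lt_def] at this; rw [Fin.le_def]; omega
    have := M_antitone p ht'
    omega
  intro t ht
  have h1 : M p i ≤ M p t := M_antitone p ht
  have h2 : M p t ≤ W p t := M_le_W p t
  omega

/-- Descent at consecutive positions iff the block changes. -/
lemma desc_iff {i j : Fin n} (hij : (i : ℕ) + 1 = (j : ℕ)) :
    W p j < W p i ↔ M p j < M p i := by
  constructor
  · intro h
    have hij' : i < j := by rw [Fin.lt_def]; omega
    rcases key_order p hij' with h2 | ⟨-, h2⟩
    · exact h2
    · omega
  · intro h
    exact desc_strong p hij h i le_rfl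

/-! ### Descent count -/

lemma countP_range_eq (m : ℕ) (f : ℕ → Prop) [DecidablePred f] :
    (List.range m).countP (fun i => decide (f i)) = ((Finset.range m).filter f).card := by
  rw [List.countP_eq_length_filter]
  rfl

lemma desList_F (hn : 1 ≤ n) : desList (permWord (F p)) = p.parts.card - 1 := by
  have h0 : (0 : ℕ) < n := hn
  rw [desList, permWord_length, countP_range_eq]
  have hcard : p.parts.card = (p.parts.erase (p.part (W p ⟨0, h0⟩))).card + 1 := by
    rw [Finset.card_erase_of_mem (p.part_mem.2 (W_mem p ⟨0, h0⟩))]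
    have : 1 ≤ p.parts.card := Finset.card_pos.2 ⟨_, p.part_mem.2 (W_mem p ⟨0, h0⟩)⟩
    omega
  rw [hcard]
  simp only [Nat.add_sub_cancel]
  apply Finset.card_bij (fun i hi => p.part (W p ⟨i + 1,
    by have := Finset.mem_range.1 (Finset.mem_filter.1 hi).1; omega⟩))
  · -- maps into target
    intro i hi
    obtain ⟨hir, hdes⟩ := Finset.mem_filter.1 hi
    rw [Finset.mem_range] at hir
    have hi1 : i + 1 < n := by omega
    have hin : i < n := by omega
    rw [permWord_getD _ hi1, permWord_getD _ hin] at hdes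
    have hdes' : W p ⟨i + 1, hi1⟩ < W p ⟨i, hin⟩ := hdes
    have hM : M p ⟨i + 1, hi1⟩ < M p ⟨i, hin⟩ := (desc_iff p rfl).1 hdes'
    rw [Finset.mem_erase]
    refine ⟨?_, p.part_mem.2 (W_mem p _)⟩
    intro heq
    have : M p ⟨i + 1, hi1⟩ = M p ⟨0, h0⟩ := (part_eq_iff_M_eq p).1 heq
    have : M p ⟨i, hin⟩ ≤ M p ⟨0, h0⟩ := M_antitone p (by simp [Fin.le_def])
    omega
  · -- injective
    intro a ha b hb hab
    obtain ⟨har, hadesc⟩ := Finset.mem_filter.1 ha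
    obtain ⟨hbr, hbdesc⟩ := Finset.mem_filter.1 hb
    rw [Finset.mem_range] at har hbr
    by_contra hne
    have key : ∀ u v : ℕ, (hu : u < n - 1) → (hv : v < n - 1) → u < v →
        ((permWord (F p)).getD (v + 1) 0 < (permWord (F p)).getD v 0) →
        p.part (W p ⟨u + 1, by omega⟩) ≠ p.part (W p ⟨v + 1, by omega⟩) := by
      intro u v hu hv huv hdes heq
      have hv1 : v + 1 < n := by omega
      have hvn : v < n := by omega
      rw [permWord_getD _ hv1, permWord_getD _ hvn] at hdes
      have hM : M p ⟨v + 1, hv1⟩ < M p ⟨v, hvn⟩ := (desc_iff p rfl).1 hdes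
      have h1 : M p ⟨v, hvn⟩ ≤ M p ⟨u + 1, by omega⟩ := M_antitone p (by simp [Fin.le_def]; omega)
      have h2 : M p ⟨u + 1, by omega⟩ = M p ⟨v + 1, hv1⟩ := (part_eq_iff_M_eq p).1 heq
      omega
    rcases lt_or_gt_of_ne hne with h | h
    · exact key a b har hbr h hbdesc hab
    · exact key b a hbr har h hadesc hab.symm
  · -- surjective
    intro B hB
    obtain ⟨hBne, hBmem⟩ := Finset.mem_erase.1 hB
    have hBsub : B ⊆ Finset.Icc 1 n := p.le hBmem
    have hBnon : B.Nonempty := p.nonempty_of_mem_parts hBmem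
    have hbm : bmin B ∈ B := bmin_mem hBnon
    obtain ⟨j, hj⟩ := W_surj p (hBsub hbm)
    have hpartj : p.part (W p j) = B := by
      rw [hj]; exact p.part_eq_of_mem hBmem hbm
    have hj0 : (j : ℕ) ≠ 0 := by
      intro h
      apply hBne
      rw [← hpartj]
      congr 1
      exact congrArg (W p) (Fin.ext h)
    set i : ℕ := (j : ℕ) - 1 with hidef
    have hjn : (j : ℕ) < n := j.isLt
    have hi1 : i + 1 < n := by omega
    have hin : i < n := by omega
    have hji : (⟨i + 1, hi1⟩ : Fin n) = j := Fin.ext (by simp only [Fin.val_mk]; omega)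
    refine ⟨i, ?_, ?_⟩
    · rw [Finset.mem_filter, Finset.mem_range]
      refine ⟨by omega, ?_⟩
      rw [permWord_getD _ hi1, permWord_getD _ hin]
      have : M p ⟨i + 1, hi1⟩ < M p ⟨i, hin⟩ := by
        have hle : M p ⟨i + 1, hi1⟩ ≤ M p ⟨i, hin⟩ := M_antitone p (by simp [Fin.le_def])
        rcases eq_or_lt_of_le hle with heq | hlt
        · exfalso
          have hpeq : p.part (W p ⟨i, hin⟩) = p.part (W p ⟨i + 1, hi1⟩) :=
            (part_eq_iff_M_eq p).2 heq.symm
          have hWi : W p ⟨i, hin⟩ ∈ B := by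
            have hm := p.mem_part (W_mem p ⟨i, hin⟩)
            rw [hpeq, hji, hpartj] at hm
            exact hm
          have h2 : bmin B ≤ W p ⟨i, hin⟩ := bmin_le hWi
          rcases key_order p (show (⟨i, hin⟩ : Fin n) < ⟨i + 1, hi1⟩ by
            simp [Fin.lt_def]) with h3 | ⟨-, h3⟩
          · omega
          · rw [hji, hj] at h3; omega
        · exact hlt
      have hlt : W p ⟨i + 1, hi1⟩ < W p ⟨i, hin⟩ := (desc_iff p rfl).2 this
      exact hlt
    · exact (congrArg (fun t => p.part (W p t)) hji).trans hpartj

/-! ### Inversion count -/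

lemma invList_F : invList (permWord (F p)) = frCount p := by
  rw [invList, frCount, permWord_length]
  apply Finset.card_bij (fun q hq => ((permWord (F p)).getD q.2 0, (permWord (F p)).getD q.1 0))
  · -- maps into
    rintro ⟨a, b⟩ hq
    obtain ⟨hmem, hab, hdes⟩ := Finset.mem_filter.1 hq
    obtain ⟨haR, hbR⟩ := Finset.mem_product.1 hmem
    rw [Finset.mem_range] at haR hbR
    dsimp only at hab hdes
    rw [permWord_getD _ hbR, permWord_getD _ haR] at hdes ⊢
    have hdes2 : W p ⟨b, hbR⟩ < W p ⟨a, haR⟩ := hdes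
    have hab' : (⟨a, haR⟩ : Fin n) < ⟨b, hbR⟩ := by simp [Fin.lt_def]; omega
    have hM : M p ⟨b, hbR⟩ < M p ⟨a, haR⟩ := by
      rcases key_order p hab' with h | ⟨-, h⟩
      · exact h
      · omega
    rw [Finset.mem_filter, Finset.mem_product]
    refine ⟨⟨W_mem p _, W_mem p _⟩, hdes, ?_⟩
    exact ⟨p.part (W p ⟨b, hbR⟩), p.part_mem.2 (W_mem p _), p.part (W p ⟨a, haR⟩),
      p.part_mem.2 (W_mem p _), p.mem_part (W_mem p _), p.mem_part (W_mem p _), hM⟩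
  · -- injective
    rintro ⟨a, b⟩ ha ⟨a', b'⟩ hb h
    obtain ⟨hmem, -⟩ := Finset.mem_filter.1 ha
    obtain ⟨hmem', -⟩ := Finset.mem_filter.1 hb
    obtain ⟨haR, hbR⟩ := Finset.mem_product.1 hmem
    obtain ⟨haR', hbR'⟩ := Finset.mem_product.1 hmem'
    rw [Finset.mem_range] at haR hbR haR' hbR'
    rw [Prod.mk.injEq] at h
    rw [permWord_getD _ hbR, permWord_getD _ haR, permWord_getD _ hbR',
      permWord_getD _ haR'] at h
    have h1 : (⟨b, hbR⟩ : Fin n) = ⟨b', hbR'⟩ := W_inj p h.1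
    have h2 : (⟨a, haR⟩ : Fin n) = ⟨a', haR'⟩ := W_inj p h.2
    rw [Fin.mk.injEq] at h1 h2
    simp [Prod.ext_iff, h1, h2]
  · -- surjective
    rintro ⟨c, d⟩ hcd
    obtain ⟨hmem, hlt, B, hB, B', hB', hcB, hdB', hbb⟩ := Finset.mem_filter.1 hcd
    obtain ⟨hcI, hdI⟩ := Finset.mem_product.1 hmem
    obtain ⟨j, hj⟩ := W_surj p hcI
    obtain ⟨i, hi⟩ := W_surj p hdI
    have hpartc : p.part (W p j) = B := by rw [hj]; exact p.part_eq_of_mem hB hcB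
    have hpartd : p.part (W p i) = B' := by rw [hi]; exact p.part_eq_of_mem hB' hdB'
    have hMj : M p j = bmin B := by rw [M, hpartc]
    have hMi : M p i = bmin B' := by rw [M, hpartd]
    have hij : i < j := by
      rcases lt_trichotomy i j with h | h | h
      · exact h
      · exfalso; rw [h] at hMi; omega
      · exfalso; have := M_antitone p (le_of_lt h); omega
    refine ⟨(i, j), ?_, ?_⟩
    · rw [Finset.mem_filter, Finset.mem_product]
      refine ⟨⟨Finset.mem_range.2 i.isLt, Finset.mem_range.2 j.isLt⟩, ?_, ?_⟩
      · exact_mod_cast hij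
      · dsimp only
        rw [permWord_getD _ j.isLt, permWord_getD _ i.isLt]
        have : W p j < W p i := by rw [hj, hi]; exact hlt
        simpa [W] using this
    · dsimp only
      rw [permWord_getD _ j.isLt, permWord_getD _ i.isLt]
      have h1 : wv (F p) ⟨(j : ℕ), j.isLt⟩ = c := by simpa [W] using hj
      have h2 : wv (F p) ⟨(i : ℕ), i.isLt⟩ = d := by simpa [W] using hi
      rw [h1, h2]

/-! ### The P property: every descent bottom is below all earlier entries -/

def PropP (v : List ℕ) : Prop :=
  ∀ u a b r, v = u ++ a :: b :: r → b < a → ∀ x ∈ u, b < x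

lemma getD_append (u l : List ℕ) (j : ℕ) : (u ++ l).getD (u.length + j) 0 = l.getD j 0 := by
  induction u with
  | nil => simp
  | cons y t ih =>
      have : t.length + 1 + j = (t.length + j) + 1 := by omega
      simp only [List.cons_append, List.length_cons, this, List.getD_cons_succ]
      exact ih

lemma getD_of_mem_prefix {u : List ℕ} {x : ℕ} (hx : x ∈ u) (l : List ℕ) :
    ∃ t, t < u.length ∧ (u ++ l).getD t 0 = x := by
  obtain ⟨t, ht, hxt⟩ := List.mem_iff_getElem.1 hx
  refine ⟨t, ht, ?_⟩
  rw [List.getD_eq_getElem _ _ (by simp; omega), List.getElem_append_left ht]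
  exact hxt

lemma PropP_F : PropP (permWord (F p)) := by
  intro u a b r heq hba x hx
  have hlen : u.length + (a :: b :: r).length = n := by
    have := congrArg List.length heq
    rw [permWord_length, List.length_append] at this
    omega
  simp only [List.length_cons] at hlen
  set i := u.length with hidef
  have hi1 : i + 1 < n := by omega
  have hin : i < n := by omega
  have hga : (permWord (F p)).getD i 0 = a := by
    rw [heq]
    have := getD_append u (a :: b :: r) 0
    simpa [hidef] using this
  have hgb : (permWord (F p)).getD (i + 1) 0 = b := by
    rw [heq]
    have := getD_append u (a :: b :: r) 1
    simpa [hidef] using this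
  rw [permWord_getD _ hin] at hga
  rw [permWord_getD _ hi1] at hgb
  obtain ⟨t, htu, hgt⟩ := getD_of_mem_prefix hx (a :: b :: r)
  rw [← heq] at hgt
  have htn : t < n := by omega
  rw [permWord_getD _ htn] at hgt
  have hdes : W p ⟨i + 1, hi1⟩ < W p ⟨i, hin⟩ := by
    change wv (F p) _ < wv (F p) _
    rw [hga, hgb]; exact hba
  have hM : M p ⟨i + 1, hi1⟩ < M p ⟨i, hin⟩ := (desc_iff p rfl).1 hdes
  have := desc_strong p rfl hM ⟨t, htn⟩ (by simp [Fin.le_def]; omega)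
  change W p _ < W p _ at this
  rw [show W p ⟨i + 1, hi1⟩ = b from hgb, show W p ⟨t, htn⟩ = x from hgt] at this
  exact this

lemma filter_eq_append_split {q : ℕ → Bool} :
    ∀ {l s t : List ℕ}, l.filter q = s ++ t →
      ∃ l₁ l₂, l = l₁ ++ l₂ ∧ l₁.filter q = s ∧ l₂.filter q = t := by
  intro l
  induction l with
  | nil =>
      intro s t h
      simp only [List.filter_nil] at h
      obtain ⟨hs, ht⟩ := List.append_eq_nil_iff.1 h.symm
      subst hs; subst ht
      exact ⟨[], [], by simp, by simp, by simp⟩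
  | cons y l ih =>
      intro s t h
      by_cases hq : q y
      · rw [List.filter_cons_of_pos hq] at h
        cases s with
        | nil =>
            refine ⟨[], y :: l, by simp, rfl, ?_⟩
            rw [List.filter_cons_of_pos hq]; exact h
        | cons s0 s' =>
            simp only [List.cons_append, List.cons.injEq] at h
            obtain ⟨rfl, h2⟩ := h
            obtain ⟨l₁, l₂, rfl, h3, h4⟩ := ih h2
            exact ⟨y :: l₁, l₂, by simp, by rw [List.filter_cons_of_pos hq, h3], h4⟩
      · rw [List.filter_cons_of_neg (by simpa using hq)] at h
        obtain ⟨l₁, l₂, rfl, h3, h4⟩ := ih h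
        exact ⟨y :: l₁, l₂, by simp, by rw [List.filter_cons_of_neg (by simpa using hq), h3], h4⟩

lemma filter_eq_cons_split {q : ℕ → Bool} {l t : List ℕ} {a : ℕ}
    (h : l.filter q = a :: t) :
    ∃ l₁ l₂, l = l₁ ++ a :: l₂ ∧ (∀ y ∈ l₁, ¬ q y) ∧ l₂.filter q = t := by
  obtain ⟨l₁, l₂, rfl, h1, h2⟩ := filter_eq_append_split (s := [a]) (t := t) (by simpa using h)
  have h3 : ∃ u₁ u₂, l₁ = u₁ ++ a :: u₂ ∧ (∀ y ∈ u₁, ¬ q y) ∧ (∀ y ∈ u₂, ¬ q y) := by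
    clear h h2
    induction l₁ with
    | nil => simp at h1
    | cons y l' ih =>
        by_cases hq : q y
        · rw [List.filter_cons_of_pos hq] at h1
          simp only [List.cons.injEq] at h1
          obtain ⟨rfl, h4⟩ := h1
          refine ⟨[], l', by simp, by simp, ?_⟩
          intro z hz
          have : z ∈ l'.filter q → False := by rw [h4]; simp
          intro hqz
          exact this (List.mem_filter.2 ⟨hz, by simpa using hqz⟩)
        · rw [List.filter_cons_of_neg (by simpa using hq)] at h1
          obtain ⟨u₁, u₂, rfl, h5, h6⟩ := ih h1
          refine ⟨y :: u₁, u₂, by simp, ?_, h6⟩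
          intro z hz
          rcases List.mem_cons.1 hz with rfl | hz
          · simpa using hq
          · exact h5 z hz
  obtain ⟨u₁, u₂, rfl, h4, h5⟩ := h3
  refine ⟨u₁, u₂ ++ l₂, by simp, h4, ?_⟩
  rw [List.filter_append, List.filter_eq_nil_iff.2 h5, List.nil_append, h2]

lemma PropP_filter {v : List ℕ} (h : PropP v) {q : ℕ → Bool}
    (hq : ∀ y z : ℕ, q y = false → q z = true → z < y) :
    PropP (v.filter q) := by
  intro u a b r heq hba x hx
  obtain ⟨V₁, V₂, rfl, hV1, hV2⟩ := filter_eq_append_split heq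
  obtain ⟨A₁, A₂, rfl, hA1, hA2⟩ := filter_eq_cons_split hV2
  obtain ⟨B₁, B₂, rfl, hB1, hB2⟩ := filter_eq_cons_split hA2
  have hxV1 : x ∈ V₁ := List.mem_of_mem_filter (hV1 ▸ hx)
  have hbq : q b = true := by
    have : b ∈ (V₁ ++ (A₁ ++ a :: (B₁ ++ b :: B₂))).filter q := by
      rw [heq]; simp
    exact (List.mem_filter.1 this).2
  rcases (B₁.eq_nil_or_concat' ) with rfl | ⟨B₁', c, rfl⟩
  · have hdecomp : V₁ ++ (A₁ ++ a :: ([] ++ b :: B₂)) = (V₁ ++ A₁) ++ a :: b :: B₂ := by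
      simp
    have := h (V₁ ++ A₁) a b B₂ hdecomp hba x (by simp [hxV1])
    exact this
  · have hcq : ¬ q c := hB1 c (by simp)
    have hbc : b < c := hq c b (by simpa using hcq) hbq
    have hdecomp : V₁ ++ (A₁ ++ a :: ((B₁' ++ [c]) ++ b :: B₂)) =
        (V₁ ++ A₁ ++ a :: B₁') ++ c :: b :: B₂ := by
      simp
    have := h (V₁ ++ A₁ ++ a :: B₁') c b B₂ hdecomp hbc x (by simp [hxV1])
    exact this

lemma PropP_not_contains {v : List ℕ} (h : PropP v) :
    ¬ containsPattern [1, 3, 2] v := by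
  rintro ⟨i, hlen, hiso⟩
  simp only [List.length_cons, List.length_nil] at hlen hiso
  have h02 := (hiso 0 (by omega) 2 (by omega)).1 (by norm_num)
  have h21 := (hiso 2 (by omega) 1 (by omega)).1 (by norm_num)
  simp only [Nat.add_zero] at h02 h21
  -- h02 : v.getD i 0 < v.getD (i+2) 0,  h21 : v.getD (i+2) 0 < v.getD (i+1) 0
  have hi2 : i + 2 < v.length := by omega
  have hi1 : i + 1 < v.length := by omega
  have hii : i < v.length := by omega
  have hdecomp : v = v.take (i + 1) ++ v[i + 1] :: v[i + 2] :: v.drop (i + 3) := by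
    conv_lhs => rw [← List.take_append_drop (i + 1) v]
    congr 1
    rw [List.drop_eq_getElem_cons hi1, List.drop_eq_getElem_cons hi2]
  have hxmem : v[i] ∈ v.take (i + 1) := by
    have h1 : (v.take (i + 1))[i]'(by rw [List.length_take]; omega) = v[i] := by
      simp [List.getElem_take]
    rw [← h1]
    exact List.getElem_mem _
  have hP := h (v.take (i + 1)) (v[i + 1]) (v[i + 2]) (v.drop (i + 3)) hdecomp
    (by rw [← List.getD_eq_getElem v 0 hi1, ← List.getD_eq_getElem v 0 hi2]; exact h21)
    (v[i]) hxmem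
  rw [← List.getD_eq_getElem v 0 hii, ← List.getD_eq_getElem v 0 hi2] at hP
  omega

lemma avoidsSP_F : AvoidsSP [1, 3, 2] (F p) := by
  intro k
  apply PropP_not_contains
  apply PropP_filter (PropP_F p)
  intro y z hy hz
  simp only [decide_eq_false_iff_not, decide_eq_true_eq, not_le] at hy hz
  omega

/-! ### Converse: avoidance implies the P property -/

lemma nodup_permWord (π : Equiv.Perm (Fin n)) : (permWord π).Nodup := by
  rw [permWord, List.nodup_ofFn]
  exact wv_injective π

lemma nodup_restrict (π : Equiv.Perm (Fin n)) (m : ℕ) : (restrict (permWord π) m).Nodup :=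
  (nodup_permWord π).filter _

lemma mem_restrict_le {π : Equiv.Perm (Fin n)} {m y : ℕ}
    (hy : y ∈ restrict (permWord π) m) : y ≤ m := by
  have := (List.mem_filter.1 hy).2
  simpa using this

lemma restrict_restrict (π : Equiv.Perm (Fin n)) {a m : ℕ} (ham : a ≤ m) :
    restrict (restrict (permWord π) m) a = restrict (permWord π) a := by
  rw [restrict, restrict, restrict, List.filter_filter]
  apply List.filter_congr
  intro x _
  by_cases hx : x ≤ a
  · simp [hx, show x ≤ m from le_trans hx ham]
  · simp [hx]

lemma containsPattern_132_of {v : List ℕ} {u₀ : List ℕ} {a b c : ℕ} {r : List ℕ}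
    (h : v = u₀ ++ a :: b :: c :: r) (h1 : a < c) (h2 : c < b) :
    containsPattern [1, 3, 2] v := by
  refine ⟨u₀.length, ?_, ?_⟩
  · rw [h, List.length_append]; simp
  · have g0 : v.getD (u₀.length + 0) 0 = a := by
      rw [h]; simpa using getD_append u₀ (a :: b :: c :: r) 0
    have g1 : v.getD (u₀.length + 1) 0 = b := by
      rw [h]; simpa using getD_append u₀ (a :: b :: c :: r) 1
    have g2 : v.getD (u₀.length + 2) 0 = c := by
      rw [h]; simpa using getD_append u₀ (a :: b :: c :: r) 2
    have t0 : ([1, 3, 2] : List ℕ).getD 0 0 = 1 := rfl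
    have t1 : ([1, 3, 2] : List ℕ).getD 1 0 = 3 := rfl
    have t2 : ([1, 3, 2] : List ℕ).getD 2 0 = 2 := rfl
    intro a' ha' b' hb'
    simp only [List.length_cons, List.length_nil] at ha' hb'
    interval_cases a' <;> interval_cases b' <;>
      simp only [g0, g1, g2, t0, t1, t2] <;>
      exact ⟨fun hlt => by omega, fun hlt => by omega⟩

lemma Qlem (π : Equiv.Perm (Fin n)) :
    ∀ N m u b c r x, m + u.length ≤ N →
      restrict (permWord π) m = u ++ b :: c :: r → c < b → x ∈ u → x < c →
      ∃ k, containsPattern [1, 3, 2] (restrict (permWord π) k) := by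
  intro N
  induction N using Nat.strong_induction_on with
  | _ N ih =>
    intro m u b c r x hN heq hcb hxu hxc
    obtain (rfl | ⟨u₀, a, rfl⟩) := u.eq_nil_or_concat'
    · cases hxu
    have hnodup : ((u₀ ++ [a]) ++ b :: c :: r).Nodup := by
      rw [← heq]; exact nodup_restrict π m
    have hdisj := List.disjoint_of_nodup_append hnodup
    have hamem : a ∈ u₀ ++ [a] := by simp
    have hab : a ≠ b := by
      intro h
      exact hdisj hamem (show a ∈ b :: c :: r by rw [h]; simp)
    have hac : a ≠ c := by
      intro h
      exact hdisj hamem (show a ∈ b :: c :: r by rw [h]; simp)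
    have hbm : b ≤ m := mem_restrict_le (by rw [heq]; simp)
    have ham : a ≤ m := mem_restrict_le (by rw [heq]; simp)
    have hxb : x ≠ b := by
      intro h
      exact hdisj hxu (show x ∈ b :: c :: r by rw [h]; simp)
    rcases lt_trichotomy a c with h | h | h
    · -- a < c : found the pattern
      refine ⟨m, containsPattern_132_of (v := restrict (permWord π) m)
        (u₀ := u₀) (a := a) (b := b) (c := c) (r := r) ?_ h hcb⟩
      rw [heq]; simp
    · exact absurd h hac
    · -- c < a
      rcases lt_trichotomy a b with h2 | h2 | h2
      · -- c < a < b : restrict to a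
        have hres : restrict (permWord π) a =
            (u₀.filter (fun y => y ≤ a)) ++ a :: c :: (r.filter (fun y => y ≤ a)) := by
          rw [← restrict_restrict π (le_of_lt (lt_of_lt_of_le h2 hbm)), heq]
          rw [restrict, List.filter_append, List.filter_append,
            List.filter_cons_of_pos (by simp),
            List.filter_cons_of_neg (by simp; omega),
            List.filter_cons_of_pos (by simp; omega)]
          simp
      -- apply induction
        have hxmem : x ∈ u₀.filter (fun y => y ≤ a) := by
          rcases List.mem_append.1 hxu with h3 | h3
          · exact List.mem_filter.2 ⟨h3, by simp; omega⟩
          · simp at h3; omega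
        have hα : a < m := lt_of_lt_of_le h2 hbm
        have hlen : (u₀.filter (fun y => y ≤ a)).length ≤ u₀.length := List.length_filter_le _ _
        have hmeas : a + (u₀.filter (fun y => y ≤ a)).length < N := by
          have : (u₀ ++ [a]).length = u₀.length + 1 := by simp
          omega
        exact ih (a + (u₀.filter (fun y => y ≤ a)).length) hmeas a _ a c _ x le_rfl hres h
          hxmem hxc
      · exact absurd h2 hab
      · -- b < a : shift left
        have heq' : restrict (permWord π) m = u₀ ++ a :: b :: (c :: r) := by
          rw [heq]; simp
        have hxu₀ : x ∈ u₀ := by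
          rcases List.mem_append.1 hxu with h3 | h3
          · exact h3
          · simp at h3; omega
        have hmeas : m + u₀.length < N := by
          have : (u₀ ++ [a]).length = u₀.length + 1 := by simp
          omega
        exact ih (m + u₀.length) hmeas m u₀ a b (c :: r) x le_rfl heq' h2 hxu₀ (by omega)

lemma restrict_self (π : Equiv.Perm (Fin n)) : restrict (permWord π) n = permWord π := by
  rw [restrict]
  apply List.filter_eq_self.2
  intro y hy
  rw [permWord] at hy
  obtain ⟨i, rfl⟩ := (List.mem_ofFn).1 hy
  simp

lemma PropP_of_avoids {π : Equiv.Perm (Fin n)} (h : AvoidsSP [1, 3, 2] π) :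
    PropP (permWord π) := by
  intro u a b r heq hba x hx
  by_contra hnb
  push_neg at hnb
  have hnodup : (u ++ a :: b :: r).Nodup := by rw [← heq]; exact nodup_permWord π
  have hxb : x ≠ b := by
    intro hxbe
    exact (List.disjoint_of_nodup_append hnodup) hx (by rw [hxbe]; simp)
  have hxb' : x < b := by omega
  obtain ⟨k, hk⟩ := Qlem π (n + u.length) n u a b r x (by omega)
    (by rw [restrict_self]; exact heq) hba hx hxb'
  exact h k hk

/-! ### The run partition -/

noncomputable def gfun (π : Equiv.Perm (Fin n)) (i : ℕ) : ℕ :=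
  ((Finset.range i).filter
    (fun j => (permWord π).getD (j + 1) 0 < (permWord π).getD j 0)).card

lemma gfun_mono (π : Equiv.Perm (Fin n)) {i j : ℕ} (h : i ≤ j) : gfun π i ≤ gfun π j :=
  Finset.card_le_card (Finset.filter_subset_filter _ (Finset.range_subset_range.2 h))

lemma gfun_succ_desc (π : Equiv.Perm (Fin n)) {i : ℕ}
    (h : (permWord π).getD (i + 1) 0 < (permWord π).getD i 0) :
    gfun π (i + 1) = gfun π i + 1 := by
  rw [gfun, gfun, Finset.range_add_one, Finset.filter_insert, if_pos h,
    Finset.card_insert_of_notMem (by simp)]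

lemma gfun_succ_asc (π : Equiv.Perm (Fin n)) {i : ℕ}
    (h : ¬ (permWord π).getD (i + 1) 0 < (permWord π).getD i 0) :
    gfun π (i + 1) = gfun π i := by
  rw [gfun, gfun, Finset.range_add_one, Finset.filter_insert, if_neg h]

lemma step_lt (π : Equiv.Perm (Fin n)) {i : ℕ} (hi : i + 1 < n)
    (h : gfun π (i + 1) = gfun π i) :
    (permWord π).getD i 0 < (permWord π).getD (i + 1) 0 := by
  have hin : i < n := by omega
  by_contra hc
  push_neg at hc
  rcases eq_or_lt_of_le hc with he | hl
  · rw [permWord_getD _ hi, permWord_getD _ hin] at he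
    have := wv_injective π he
    simp [Fin.ext_iff] at this
  · have := gfun_succ_desc π hl
    omega

lemma run_incr (π : Equiv.Perm (Fin n)) :
    ∀ d i, i + d < n → 0 < d → gfun π i = gfun π (i + d) →
      (permWord π).getD i 0 < (permWord π).getD (i + d) 0 := by
  intro d
  induction d with
  | zero => intro i _ h; omega
  | succ d ih =>
      intro i hdn _ hg
      have hgr : gfun π (i + (d + 1)) = gfun π (i + d + 1) := rfl
      have h1 : gfun π i ≤ gfun π (i + d) := gfun_mono π (by omega)
      have h2 : gfun π (i + d) ≤ gfun π (i + d + 1) := gfun_mono π (by omega)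
      have h3 : gfun π (i + d + 1) = gfun π (i + d) := by omega
      have hstep := step_lt π (show (i + d) + 1 < n by omega) h3
      show (permWord π).getD i 0 < (permWord π).getD (i + d + 1) 0
      rcases Nat.eq_zero_or_pos d with rfl | hd
      · simpa using hstep
      · exact lt_trans (ih i (by omega) hd (by omega)) hstep

lemma run_incr' (π : Equiv.Perm (Fin n)) {i j : ℕ} (hij : i < j) (hj : j < n)
    (hg : gfun π i = gfun π j) :
    (permWord π).getD i 0 < (permWord π).getD j 0 := by
  have := run_incr π (j - i) i (by omega) (by omega) (by rw [show i + (j - i) = j by omega]; exact hg)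
  rwa [show i + (j - i) = j by omega] at this

lemma Pidx {π : Equiv.Perm (Fin n)} (hP : PropP (permWord π)) {j t : ℕ}
    (hj : j + 1 < n) (ht : t ≤ j)
    (hd : (permWord π).getD (j + 1) 0 < (permWord π).getD j 0) :
    (permWord π).getD (j + 1) 0 < (permWord π).getD t 0 := by
  rcases eq_or_lt_of_le ht with rfl | htj
  · exact hd
  · set w := permWord π with hw
    have hlen : w.length = n := permWord_length π
    have hj1 : j + 1 < w.length := by omega
    have hjj : j < w.length := by omega
    have htw : t < w.length := by omega
    have hdecomp : w = w.take j ++ w[j] :: w[j + 1] :: w.drop (j + 2) := by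
      conv_lhs => rw [← List.take_append_drop j w]
      congr 1
      rw [List.drop_eq_getElem_cons hjj, List.drop_eq_getElem_cons hj1]
    have hxmem : w[t] ∈ w.take j := by
      have h1 : (w.take j)[t]'(by rw [List.length_take]; omega) = w[t] := by
        simp [List.getElem_take]
      rw [← h1]
      exact List.getElem_mem _
    have := hP (w.take j) (w[j]) (w[j + 1]) (w.drop (j + 2)) hdecomp
      (by rw [← List.getD_eq_getElem w 0 hjj, ← List.getD_eq_getElem w 0 hj1]; exact hd)
      (w[t]) hxmem
    rw [← List.getD_eq_getElem w 0 htw, ← List.getD_eq_getElem w 0 hj1] at this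
    exact this

noncomputable def blockOf (π : Equiv.Perm (Fin n)) (i : Fin n) : Finset ℕ :=
  (Finset.univ.filter (fun t : Fin n => gfun π (t : ℕ) = gfun π (i : ℕ))).image (wv π)

lemma mem_blockOf_self (π : Equiv.Perm (Fin n)) (i : Fin n) : wv π i ∈ blockOf π i := by
  rw [blockOf]
  exact Finset.mem_image.2 ⟨i, by simp, rfl⟩

lemma blockOf_eq_of_g_eq (π : Equiv.Perm (Fin n)) {i j : Fin n}
    (h : gfun π (i : ℕ) = gfun π (j : ℕ)) : blockOf π i = blockOf π j := by
  rw [blockOf, blockOf]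
  congr 1
  apply Finset.filter_congr
  intro t _
  simp [h]

noncomputable def runPart (π : Equiv.Perm (Fin n)) : Finpartition (Finset.Icc 1 n) where
  parts := Finset.univ.image (blockOf π)
  supIndep := by
    rw [Finset.supIndep_iff_pairwiseDisjoint]
    intro B hB B' hB' hne
    obtain ⟨i, -, rfl⟩ := Finset.mem_image.1 hB
    obtain ⟨j, -, rfl⟩ := Finset.mem_image.1 hB'
    have hgne : gfun π (i : ℕ) ≠ gfun π (j : ℕ) := fun h => hne (blockOf_eq_of_g_eq π h)
    simp only [Function.onFun, id]
    rw [Finset.disjoint_left]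
    intro x hx hx'
    obtain ⟨t, ht, rfl⟩ := Finset.mem_image.1 hx
    obtain ⟨t', ht', htt⟩ := Finset.mem_image.1 hx'
    have : t' = t := wv_injective π htt
    subst this
    rw [Finset.mem_filter] at ht ht'
    exact hgne (ht.2 ▸ ht'.2 ▸ rfl)
  sup_parts := by
    apply Finset.Subset.antisymm
    · intro x hx
      rw [Finset.mem_sup] at hx
      obtain ⟨B, hB, hxB⟩ := hx
      obtain ⟨i, -, rfl⟩ := Finset.mem_image.1 hB
      obtain ⟨t, -, rfl⟩ := Finset.mem_image.1 hxB
      exact wv_mem π t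
    · intro x hx
      obtain ⟨i, rfl⟩ := wv_surj π hx
      rw [Finset.mem_sup]
      exact ⟨blockOf π i, Finset.mem_image.2 ⟨i, Finset.mem_univ i, rfl⟩,
        mem_blockOf_self π i⟩
  bot_notMem := by
    intro h
    obtain ⟨i, -, hi⟩ := Finset.mem_image.1 h
    have := mem_blockOf_self π i
    rw [hi] at this
    exact absurd this (by simp)

lemma runPart_part_eq (π : Equiv.Perm (Fin n)) (i : Fin n) :
    (runPart π).part (wv π i) = blockOf π i := by
  apply (runPart π).part_eq_of_mem
  · exact Finset.mem_image.2 ⟨i, Finset.mem_univ i, rfl⟩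
  · exact mem_blockOf_self π i

/-- first index of the run of `j` -/
noncomputable def runStart (π : Equiv.Perm (Fin n)) (j : Fin n) : Fin n :=
  (Finset.univ.filter (fun t : Fin n => gfun π (t : ℕ) = gfun π (j : ℕ))).min'
    ⟨j, by simp⟩

lemma runStart_g (π : Equiv.Perm (Fin n)) (j : Fin n) :
    gfun π ((runStart π j : Fin n) : ℕ) = gfun π (j : ℕ) := by
  have := Finset.min'_mem (Finset.univ.filter
    (fun t : Fin n => gfun π (t : ℕ) = gfun π (j : ℕ))) ⟨j, by simp⟩
  exact (Finset.mem_filter.1 this).2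

lemma runStart_le (π : Equiv.Perm (Fin n)) {j t : Fin n}
    (h : gfun π (t : ℕ) = gfun π (j : ℕ)) : runStart π j ≤ t :=
  Finset.min'_le _ _ (by simp [h])

lemma bmin_blockOf (π : Equiv.Perm (Fin n)) (j : Fin n) :
    bmin (blockOf π j) = wv π (runStart π j) := by
  apply le_antisymm
  · apply bmin_le
    rw [blockOf]
    exact Finset.mem_image.2 ⟨runStart π j, by simp [runStart_g], rfl⟩
  · have hb : bmin (blockOf π j) ∈ blockOf π j := bmin_mem ⟨wv π j, mem_blockOf_self π j⟩
    obtain ⟨t, ht, hteq⟩ := Finset.mem_image.1 hb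
    rw [Finset.mem_filter] at ht
    have hle : runStart π j ≤ t := runStart_le π ht.2
    rcases eq_or_lt_of_le hle with rfl | hlt
    · rw [hteq]
    · rw [← hteq]
      apply le_of_lt
      have := run_incr' π (show ((runStart π j : Fin n) : ℕ) < (t : ℕ) from hlt) t.isLt
        (by rw [runStart_g π j, ht.2])
      rw [permWord_getD _ (runStart π j).isLt, permWord_getD _ t.isLt] at this
      simpa using this

lemma bmin_blockOf_lt {π : Equiv.Perm (Fin n)} (hP : PropP (permWord π)) {i j : Fin n}
    (hg : gfun π (i : ℕ) < gfun π (j : ℕ)) :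
    bmin (blockOf π j) < bmin (blockOf π i) := by
  set s := runStart π j with hs
  have hsg : gfun π (s : ℕ) = gfun π (j : ℕ) := runStart_g π j
  have hs1 : 1 ≤ (s : ℕ) := by
    by_contra h
    push_neg at h
    have h0 : (s : ℕ) = 0 := by omega
    have : gfun π (s : ℕ) = 0 := by rw [h0]; simp [gfun]
    have : gfun π (j : ℕ) = 0 := by omega
    omega
  have hdesc : (permWord π).getD ((s : ℕ) - 1 + 1) 0 < (permWord π).getD ((s : ℕ) - 1) 0 := by
    by_contra hc
    have := gfun_succ_asc π hc
    rw [show (s : ℕ) - 1 + 1 = (s : ℕ) by omega] at this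
    have hmem : gfun π ((s : ℕ) - 1) = gfun π (j : ℕ) := by omega
    have : s ≤ (⟨(s : ℕ) - 1, by omega⟩ : Fin n) := runStart_le π (by simpa using hmem)
    rw [Fin.le_def] at this
    simp at this
    omega
  -- the start of run i comes strictly before s
  set σ := runStart π i with hσ
  have hσg : gfun π (σ : ℕ) = gfun π (i : ℕ) := runStart_g π i
  have hσs : (σ : ℕ) < (s : ℕ) := by
    by_contra h
    push_neg at h
    have := gfun_mono π h
    omega
  have hP2 := Pidx hP (show (s : ℕ) - 1 + 1 < n by
      have := s.isLt; omega)
    (show (σ : ℕ) ≤ (s : ℕ) - 1 by omega) hdesc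
  rw [show (s : ℕ) - 1 + 1 = (s : ℕ) by omega] at hP2
  rw [bmin_blockOf π j, bmin_blockOf π i, ← hs, ← hσ]
  rw [permWord_getD _ s.isLt, permWord_getD _ σ.isLt] at hP2
  simpa using hP2

/-- The main reconstruction: if the word of `π` has property P, then `π` is obtained
from its run partition. -/
lemma F_runPart {π : Equiv.Perm (Fin n)} (hP : PropP (permWord π)) :
    F (runPart π) = π := by
  symm
  rw [F, Tuple.eq_sort_iff]
  constructor
  · -- monotone
    intro i j hij
    rcases eq_or_lt_of_le hij with rfl | hlt
    · exact le_rfl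
    apply le_of_lt
    show pkey (runPart π) (((π i : ℕ)) + 1) < pkey (runPart π) (((π j : ℕ)) + 1)
    have h1 : ((π i : ℕ)) + 1 = wv π i := rfl
    have h2 : ((π j : ℕ)) + 1 = wv π j := rfl
    rw [h1, h2]
    rw [pkey_lt_pkey (runPart π) (wv_mem π i) (wv_mem π j)]
    rw [runPart_part_eq π i, runPart_part_eq π j]
    have hg : gfun π (i : ℕ) ≤ gfun π (j : ℕ) := gfun_mono π (le_of_lt hlt)
    rcases eq_or_lt_of_le hg with hge | hglt
    · right
      constructor
      · rw [blockOf_eq_of_g_eq π hge]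
      · have := run_incr' π (show (i : ℕ) < (j : ℕ) from hlt) j.isLt hge
        rw [permWord_getD _ i.isLt, permWord_getD _ j.isLt] at this
        simpa using this
    · left
      exact bmin_blockOf_lt hP hglt
  · -- tie-breaking (vacuous by injectivity)
    intro i j hij hfeq
    exfalso
    have := pkey_injOn (runPart π)
      (show ((π i : ℕ)) + 1 ∈ Finset.Icc 1 n from wv_mem π i)
      (show ((π j : ℕ)) + 1 ∈ Finset.Icc 1 n from wv_mem π j) hfeq
    have h3 : π i = π j := Fin.ext (by omega)
    exact absurd (π.injective h3) (ne_of_lt hij)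

/-! ### `runPart` is a left inverse of `F` -/

lemma g_step_iff (p : Finpartition (Finset.Icc 1 n)) {i : ℕ} (hi : i + 1 < n) :
    gfun (F p) i = gfun (F p) (i + 1) ↔ M p ⟨i, by omega⟩ = M p ⟨i + 1, hi⟩ := by
  have hin : i < n := by omega
  have hbr : ((permWord (F p)).getD (i + 1) 0 < (permWord (F p)).getD i 0) ↔
      W p ⟨i + 1, hi⟩ < W p ⟨i, hin⟩ := by
    rw [permWord_getD _ hi, permWord_getD _ hin]; exact Iff.rfl
  have hdi := desc_iff p (i := ⟨i, hin⟩) (j := ⟨i + 1, hi⟩) rfl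
  have hanti : M p ⟨i + 1, hi⟩ ≤ M p ⟨i, hin⟩ := M_antitone p (by simp [Fin.le_def])
  by_cases hd : (permWord (F p)).getD (i + 1) 0 < (permWord (F p)).getD i 0
  · have h1 := gfun_succ_desc (F p) hd
    have h2 : M p ⟨i + 1, hi⟩ < M p ⟨i, hin⟩ := hdi.1 (hbr.1 hd)
    constructor
    · intro h; omega
    · intro h; omega
  · have h1 := gfun_succ_asc (F p) hd
    have h2 : ¬ M p ⟨i + 1, hi⟩ < M p ⟨i, hin⟩ := fun h => hd (hbr.2 (hdi.2 h))
    constructor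
    · intro _; omega
    · intro _; omega

lemma g_iff_M (p : Finpartition (Finset.Icc 1 n)) :
    ∀ d i, (h : i + d < n) →
      (gfun (F p) i = gfun (F p) (i + d) ↔ M p ⟨i, by omega⟩ = M p ⟨i + d, h⟩) := by
  intro d
  induction d with
  | zero => intro i h; simp
  | succ d ih =>
      intro i h
      have hgr : gfun (F p) (i + (d + 1)) = gfun (F p) (i + d + 1) := rfl
      have hMr : M p ⟨i + (d + 1), h⟩ = M p ⟨i + d + 1, h⟩ := rfl
      have hstep := g_step_iff p (show (i + d) + 1 < n from h)
      have hih := ih i (by omega)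
      have hg1 : gfun (F p) i ≤ gfun (F p) (i + d) := gfun_mono _ (by omega)
      have hg2 : gfun (F p) (i + d) ≤ gfun (F p) (i + d + 1) := gfun_mono _ (by omega)
      have hM1 : M p ⟨i + d, by omega⟩ ≤ M p ⟨i, by omega⟩ :=
        M_antitone p (by rw [Fin.le_def]; simp only [Fin.val_mk]; omega)
      have hM2 : M p ⟨i + d + 1, h⟩ ≤ M p ⟨i + d, by omega⟩ :=
        M_antitone p (by rw [Fin.le_def]; simp only [Fin.val_mk]; omega)
      rw [hgr, hMr]
      constructor
      · intro hgg
        have e1 : gfun (F p) i = gfun (F p) (i + d) := by omega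
        have e2 : gfun (F p) (i + d) = gfun (F p) (i + d + 1) := by omega
        have m1 := hih.1 e1
        have m2 := hstep.1 e2
        omega
      · intro hMM
        have m1 : M p ⟨i, by omega⟩ = M p ⟨i + d, by omega⟩ := by omega
        have m2 : M p ⟨i + d, by omega⟩ = M p ⟨i + d + 1, h⟩ := by omega
        have e1 := hih.2 m1
        have e2 := hstep.2 m2
        omega

lemma g_eq_iff_M_eq (p : Finpartition (Finset.Icc 1 n)) {i j : Fin n} (hij : i ≤ j) :
    gfun (F p) (i : ℕ) = gfun (F p) (j : ℕ) ↔ M p i = M p j := by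
  have hd : (i : ℕ) + ((j : ℕ) - (i : ℕ)) < n := by
    have := j.isLt; rw [Fin.le_def] at hij; omega
  have := g_iff_M p ((j : ℕ) - (i : ℕ)) (i : ℕ) hd
  have hje : (⟨(i : ℕ) + ((j : ℕ) - (i : ℕ)), hd⟩ : Fin n) = j := by
    apply Fin.ext; simp only [Fin.val_mk]; rw [Fin.le_def] at hij; omega
  have hie : (⟨(i : ℕ), by omega⟩ : Fin n) = i := Fin.ext rfl
  rw [hje, hie] at this
  rw [show (i : ℕ) + ((j : ℕ) - (i : ℕ)) = (j : ℕ) by rw [Fin.le_def] at hij; omega] at this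
  exact this

lemma g_eq_iff_M_eq' (p : Finpartition (Finset.Icc 1 n)) (i j : Fin n) :
    gfun (F p) (i : ℕ) = gfun (F p) (j : ℕ) ↔ M p i = M p j := by
  rcases le_total i j with h | h
  · exact g_eq_iff_M_eq p h
  · rw [eq_comm, g_eq_iff_M_eq p h, eq_comm]

lemma blockOf_F (p : Finpartition (Finset.Icc 1 n)) (i : Fin n) :
    blockOf (F p) i = p.part (W p i) := by
  apply Finset.ext
  intro x
  constructor
  · intro hx
    obtain ⟨t, ht, rfl⟩ := Finset.mem_image.1 hx
    rw [Finset.mem_filter] at ht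
    have hM : M p t = M p i := (g_eq_iff_M_eq' p t i).1 ht.2
    have hpart : p.part (W p t) = p.part (W p i) := (part_eq_iff_M_eq p).2 hM
    rw [← hpart]
    exact p.mem_part (W_mem p t)
  · intro hx
    have hxI : x ∈ Finset.Icc 1 n := part_subset p (W_mem p i) hx
    obtain ⟨t, rfl⟩ := W_surj p hxI
    have hpart : p.part (W p t) = p.part (W p i) :=
      p.eq_of_mem_parts (p.part_mem.2 (W_mem p t)) (p.part_mem.2 (W_mem p i))
        (p.mem_part (W_mem p t)) hx
    have hM : M p t = M p i := (part_eq_iff_M_eq p).1 hpart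
    have hg : gfun (F p) (t : ℕ) = gfun (F p) (i : ℕ) := (g_eq_iff_M_eq' p t i).2 hM
    exact Finset.mem_image.2 ⟨t, Finset.mem_filter.2 ⟨Finset.mem_univ t, hg⟩, rfl⟩

lemma runPart_F (p : Finpartition (Finset.Icc 1 n)) : runPart (F p) = p := by
  apply Finpartition.ext
  show Finset.univ.image (blockOf (F p)) = p.parts
  apply Finset.Subset.antisymm
  · intro B hB
    obtain ⟨i, -, rfl⟩ := Finset.mem_image.1 hB
    rw [blockOf_F p i]
    exact p.part_mem.2 (W_mem p i)
  · intro B hB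
    obtain ⟨x, hx⟩ := p.nonempty_of_mem_parts hB
    have hxI : x ∈ Finset.Icc 1 n := p.le hB hx
    obtain ⟨i, rfl⟩ := W_surj p hxI
    have : p.part (W p i) = B := p.part_eq_of_mem hB hx
    rw [← this, ← blockOf_F p i]
    exact Finset.mem_image.2 ⟨i, Finset.mem_univ i, rfl⟩

lemma parts_card_pos (p : Finpartition (Finset.Icc 1 n)) (hn : 1 ≤ n) :
    1 ≤ p.parts.card := by
  apply Finset.card_pos.2
  exact ⟨p.part 1, p.part_mem.2 (by rw [Finset.mem_Icc]; omega)⟩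

end Stmt11

/-- for `n ≥ 1`, `k ≥ 1` and `ℓ ≥ 0`, the number of `π ∈ SP_n(132)`
with `des(π) = k-1` and `inv(π) = ℓ` equals the number of set partitions of `[n]`
with exactly `k` blocks and exactly `ℓ` free rises. -/
theorem stmt11 (n k l : ℕ) (hn : 1 ≤ n) (hk : 1 ≤ k) :
    {π : Equiv.Perm (Fin n) | AvoidsSP [1, 3, 2] π ∧
      desList (permWord π) = k - 1 ∧ invList (permWord π) = l}.ncard =
    {p : Finpartition (Finset.Icc 1 n) | p.parts.card = k ∧ frCount p = l}.ncard := by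
  classical
  have himg : Stmt11.F '' {p : Finpartition (Finset.Icc 1 n) | p.parts.card = k ∧ frCount p = l} =
      {π : Equiv.Perm (Fin n) | AvoidsSP [1, 3, 2] π ∧
        desList (permWord π) = k - 1 ∧ invList (permWord π) = l} := by
    ext π
    constructor
    · rintro ⟨p, ⟨hpk, hpl⟩, rfl⟩
      exact ⟨Stmt11.avoidsSP_F p, by rw [Stmt11.desList_F p hn, hpk],
        by rw [Stmt11.invList_F p, hpl]⟩
    · rintro ⟨hav, hdes, hinv⟩
      refine ⟨Stmt11.runPart π, ⟨?_, ?_⟩, Stmt11.F_runPart (Stmt11.PropP_of_avoids hav)⟩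
      · have h1 := Stmt11.desList_F (Stmt11.runPart π) hn
        rw [Stmt11.F_runPart (Stmt11.PropP_of_avoids hav)] at h1
        have h2 := Stmt11.parts_card_pos (Stmt11.runPart π) hn
        omega
      · have h1 := Stmt11.invList_F (Stmt11.runPart π)
        rw [Stmt11.F_runPart (Stmt11.PropP_of_avoids hav)] at h1
        rw [← h1]
        exact hinv
  rw [← himg]
  apply Set.ncard_image_of_injOn
  intro p hp q hq h
  rw [← Stmt11.runPart_F p, h, Stmt11.runPart_F q]
end

section
/- For all n ≥ 1 and all k ≥ 1, the number of permutations π ∈ SP_n(132) with exactly k−1 descents equals the Stirling number of the second kind S(n,k), i.e., the number of set partitions of [n] into exactly k blocks. -/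
open scoped Classical

namespace Stmt12


/-- Every descent bottom is a strict left-to-right minimum. -/
def Cw (w : List ℕ) : Prop :=
  ∀ i j, i ≤ j → j + 1 < w.length → w.getD (j + 1) 0 < w.getD j 0 →
    w.getD (j + 1) 0 < w.getD i 0

lemma filter_pos1 (p : ℕ → Bool) :
    ∀ w : List ℕ, 0 < (w.filter p).length →
    ∃ c, c < w.length ∧ w.getD c 0 = (w.filter p).getD 0 0 ∧
      ∀ d < c, p (w.getD d 0) = false := by
  intro w
  induction w with
  | nil => simp
  | cons x t ih =>
    intro h
    by_cases hx : p x
    · exact ⟨0, by simp, by simp [List.filter_cons, hx], by simp⟩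
    · have hx' : p x = false := by simpa using hx
      rw [List.filter_cons, if_neg (by simp [hx'])] at h ⊢
      obtain ⟨c, hc, hv, hd⟩ := ih h
      refine ⟨c + 1, by simpa using hc, by simpa using hv, ?_⟩
      intro d hd'
      cases d with
      | zero => simpa using hx'
      | succ e => simpa using hd e (by omega)

lemma filter_pos2 (p : ℕ → Bool) :
    ∀ (w : List ℕ) (i : ℕ), i + 1 < (w.filter p).length →
    ∃ b c, b < c ∧ c < w.length ∧
      w.getD b 0 = (w.filter p).getD i 0 ∧
      w.getD c 0 = (w.filter p).getD (i + 1) 0 ∧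
      ∀ d, b < d → d < c → p (w.getD d 0) = false := by
  intro w
  induction w with
  | nil => simp
  | cons x t ih =>
    intro i h
    by_cases hx : p x
    · rw [List.filter_cons, if_pos (by simp [hx])] at h ⊢
      cases i with
      | zero =>
        have h0 : 0 < (t.filter p).length := by simpa using h
        obtain ⟨c, hc, hv, hd⟩ := filter_pos1 p t h0
        refine ⟨0, c + 1, by omega, by simpa using hc, by simp, by simpa using hv, ?_⟩
        intro d hd1 hd2
        cases d with
        | zero => omega
        | succ e => simpa using hd e (by omega)
      | succ j =>
        obtain ⟨b, c, hbc, hc, hvb, hvc, hd⟩ := ih j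
          (by simp only [List.length_cons] at h; omega)
        refine ⟨b + 1, c + 1, by omega, by simpa using hc, by simpa using hvb,
          by simpa using hvc, ?_⟩
        intro d hd1 hd2
        cases d with
        | zero => omega
        | succ e => simpa using hd e (by omega) (by omega)
    · have hx' : p x = false := by simpa using hx
      rw [List.filter_cons, if_neg (by simp [hx'])] at h ⊢
      obtain ⟨b, c, hbc, hc, hvb, hvc, hd⟩ := ih i h
      refine ⟨b + 1, c + 1, by omega, by simpa using hc, by simpa using hvb,
        by simpa using hvc, ?_⟩
      intro d hd1 hd2
      cases d with
      | zero => omega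
      | succ e => simpa using hd e (by omega) (by omega)

lemma filter_pos3 (p : ℕ → Bool) :
    ∀ (w : List ℕ) (i : ℕ), i + 2 < (w.filter p).length →
    ∃ a b c, a < b ∧ b < c ∧ c < w.length ∧
      w.getD a 0 = (w.filter p).getD i 0 ∧
      w.getD b 0 = (w.filter p).getD (i + 1) 0 ∧
      w.getD c 0 = (w.filter p).getD (i + 2) 0 ∧
      ∀ d, b < d → d < c → p (w.getD d 0) = false := by
  intro w
  induction w with
  | nil => simp
  | cons x t ih =>
    intro i h
    by_cases hx : p x
    · rw [List.filter_cons, if_pos (by simp [hx])] at h ⊢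
      cases i with
      | zero =>
        have h0 : 0 + 1 < (t.filter p).length := by
          simp only [List.length_cons] at h; omega
        obtain ⟨b, c, hbc, hc, hvb, hvc, hd⟩ := filter_pos2 p t 0 h0
        refine ⟨0, b + 1, c + 1, by omega, by omega, by simpa using hc, by simp,
          by simpa using hvb, by simpa using hvc, ?_⟩
        intro d hd1 hd2
        cases d with
        | zero => omega
        | succ e => simpa using hd e (by omega) (by omega)
      | succ j =>
        obtain ⟨a, b, c, hab, hbc, hc, hva, hvb, hvc, hd⟩ := ih j
          (by simp only [List.length_cons] at h; omega)
        refine ⟨a + 1, b + 1, c + 1, by omega, by omega, by simpa using hc,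
          by simpa using hva, by simpa using hvb, by simpa using hvc, ?_⟩
        intro d hd1 hd2
        cases d with
        | zero => omega
        | succ e => simpa using hd e (by omega) (by omega)
    · have hx' : p x = false := by simpa using hx
      rw [List.filter_cons, if_neg (by simp [hx'])] at h ⊢
      obtain ⟨a, b, c, hab, hbc, hc, hva, hvb, hvc, hd⟩ := ih i h
      refine ⟨a + 1, b + 1, c + 1, by omega, by omega, by simpa using hc,
        by simpa using hva, by simpa using hvb, by simpa using hvc, ?_⟩
      intro d hd1 hd2
      cases d with
      | zero => omega
      | succ e => simpa using hd e (by omega) (by omega)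

lemma filter_getD_mem {p : ℕ → Bool} {w : List ℕ} {i : ℕ} (h : i < (w.filter p).length) :
    p ((w.filter p).getD i 0) = true := by
  rw [List.getD_eq_getElem _ _ h]
  exact List.of_mem_filter (List.getElem_mem h)

lemma avoid_of_Cw {w : List ℕ} (hC : Cw w) (k : ℕ) :
    ¬ containsPattern [1, 3, 2] (restrict w k) := by
  rintro ⟨i, hlen, hiso⟩
  simp only [restrict] at hlen hiso
  set u := List.filter (fun x => decide (x ≤ k)) w with hu
  have hlen3 : i + 2 < u.length := by simp at hlen; omega
  have h02 : u.getD i 0 < u.getD (i + 2) 0 := by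
    have := (hiso 0 (by norm_num) 2 (by norm_num)).mp (by norm_num)
    simpa using this
  have h21 : u.getD (i + 2) 0 < u.getD (i + 1) 0 := by
    have := (hiso 2 (by norm_num) 1 (by norm_num)).mp (by norm_num)
    simpa using this
  obtain ⟨a, b, c, hab, hbc, hc, hva, hvb, hvc, hgap⟩ :=
    filter_pos3 (fun x => decide (x ≤ k)) w i hlen3
  rw [← hu] at hva hvb hvc
  obtain ⟨j, rfl⟩ : ∃ j, c = j + 1 := ⟨c - 1, by omega⟩
  have hules : u.getD (i + 2) 0 ≤ k := by
    have := filter_getD_mem (p := fun x => decide (x ≤ k)) (w := w)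
      (show i + 2 < (List.filter (fun x => decide (x ≤ k)) w).length from by rw [← hu]; omega)
    rw [← hu] at this
    simpa using this
  have hdesc : w.getD (j + 1) 0 < w.getD j 0 := by
    rcases eq_or_lt_of_le (show b ≤ j by omega) with hbj | hbj
    · subst hbj
      rw [hvb, hvc]; exact h21
    · have := hgap j (by omega) (by omega)
      have hk : ¬ (w.getD j 0 ≤ k) := by simpa using this
      rw [hvc]; omega
  have := hC a j (by omega) hc hdesc
  rw [hva, hvc] at this
  omega

lemma filter_min_singleton :
    ∀ (L : List ℕ), L.Nodup → L ≠ [] →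
    ∃ c ∈ L, (∀ y ∈ L, c ≤ y) ∧ L.filter (fun y => decide (y ≤ c)) = [c] := by
  intro L
  induction L with
  | nil => simp
  | cons x t ih =>
    intro hnd _
    rcases eq_or_ne t [] with rfl | ht
    · exact ⟨x, by simp, by simp, by simp⟩
    · obtain ⟨c, hcmem, hcle, hcf⟩ := ih ((List.nodup_cons.mp hnd).2) ht
      have hxc0 : x ≠ c := by rintro rfl; exact (List.nodup_cons.mp hnd).1 hcmem
      rcases le_or_gt x c with hxc | hxc
      · have hxc' : x < c := lt_of_le_of_ne hxc hxc0
        refine ⟨x, by simp, ?_, ?_⟩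
        · intro y hy
          rcases List.mem_cons.mp hy with rfl | hy
          · exact le_rfl
          · exact le_trans (le_of_lt hxc') (hcle y hy)
        · rw [List.filter_cons, if_pos (by simp)]
          have he : t.filter (fun y => decide (y ≤ x)) = [] := by
            rw [List.filter_eq_nil_iff]
            intro y hy
            have := hcle y hy
            simp only [decide_eq_true_eq, not_le]
            omega
          rw [he]
      · refine ⟨c, by simp [hcmem], ?_, ?_⟩
        · intro y hy
          rcases List.mem_cons.mp hy with rfl | hy
          · omega
          · exact hcle y hy
        · rw [List.filter_cons, if_neg (by simp only [decide_eq_true_eq]; omega), hcf]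

lemma containsPattern_cons {τ u : List ℕ} (x : ℕ) (h : containsPattern τ u) :
    containsPattern τ (x :: u) := by
  obtain ⟨i, hlen, hiso⟩ := h
  refine ⟨i + 1, by simp only [List.length_cons]; omega, ?_⟩
  intro a ha b hb
  have := hiso a ha b hb
  simpa [Nat.add_right_comm i 1] using this

lemma restrict_cons (x : ℕ) (w : List ℕ) (k : ℕ) :
    restrict (x :: w) k = if x ≤ k then x :: restrict w k else restrict w k := by
  simp [restrict, List.filter_cons]

lemma containsPattern_restrict_cons {τ w : List ℕ} {x k : ℕ}
    (h : containsPattern τ (restrict w k)) : containsPattern τ (restrict (x :: w) k) := by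
  rw [restrict_cons]
  split
  · exact containsPattern_cons x h
  · exact h

lemma core132 {x b : ℕ} {t : List ℕ} (hnd : (x :: t).Nodup) {j : ℕ}
    (hj : j < t.length) (hj1 : 1 ≤ j) (hb : t.getD j 0 = b) (hx : x < b)
    (hmid : ∀ s < j, b < t.getD s 0) :
    ∃ k, containsPattern [1, 3, 2] (restrict (x :: t) k) := by
  set M := t.take j with hM
  have hMlen : M.length = j := by simp [hM]; omega
  have hMnd : M.Nodup := ((List.nodup_cons.mp hnd).2).sublist (List.take_sublist _ _)
  have hMne : M ≠ [] := by
    intro h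
    rw [h] at hMlen
    simp at hMlen
    omega
  have hMbig : ∀ y ∈ M, b < y := by
    intro y hy
    obtain ⟨s, hs, hsy⟩ := List.mem_iff_getElem.mp hy
    have hsj : s < j := by omega
    have h1 : M[s] = t.getD s 0 := by
      rw [List.getD_eq_getElem _ _ (by omega : s < t.length)]
      simp [hM]
    rw [← hsy, h1]
    exact hmid s hsj
  obtain ⟨c, hcmem, hcle, hcf⟩ := filter_min_singleton M hMnd hMne
  have hbc : b < c := hMbig c hcmem
  have hkey : restrict (x :: t) c = x :: c :: b :: restrict (t.drop (j + 1)) c := by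
    have ht : t = M ++ t.getD j 0 :: t.drop (j + 1) := by
      conv_lhs => rw [← List.take_append_drop j t]
      rw [List.drop_eq_getElem_cons hj, hM, List.getD_eq_getElem _ _ hj]
    rw [hb] at ht
    rw [restrict_cons, if_pos (by omega)]
    conv_lhs => rw [ht]
    simp only [restrict, List.filter_append, List.filter_cons]
    rw [hcf, if_pos (by simp only [decide_eq_true_eq]; omega)]
    simp [restrict]
  refine ⟨c, 0, ?_, ?_⟩
  · rw [hkey]
    simp only [List.length_cons, List.length_nil]
    omega
  · intro a ha b' hb'
    rw [hkey]
    have ha3 : a < 3 := by simpa using ha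
    have hb3 : b' < 3 := by simpa using hb'
    interval_cases a <;> interval_cases b' <;>
      simp only [List.getD_cons_zero, List.getD_cons_succ, Nat.add_zero, Nat.zero_add] <;>
      constructor <;> intro <;> omega

lemma nodup_getD_ne {w : List ℕ} (hnd : w.Nodup) {i j : ℕ} (hi : i < w.length)
    (hj : j < w.length) (hij : i ≠ j) : w.getD i 0 ≠ w.getD j 0 := by
  rw [List.getD_eq_getElem _ _ hi, List.getD_eq_getElem _ _ hj]
  intro h
  exact hij ((hnd.getElem_inj_iff).mp h)

lemma Cw_of_avoid : ∀ (w : List ℕ), w.Nodup →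
    (∀ k, ¬ containsPattern [1, 3, 2] (restrict w k)) → Cw w := by
  intro w
  induction w with
  | nil => intro _ _ i j _ h; simp at h
  | cons x t ih =>
    intro hnd havoid
    by_contra hCw
    simp only [Cw, not_forall] at hCw
    obtain ⟨i, j, hij, hjlen, hdesc, hviol⟩ := hCw
    have hCt : Cw t := by
      apply ih ((List.nodup_cons.mp hnd).2)
      intro k hk
      exact havoid k (containsPattern_restrict_cons hk)
    simp only [List.length_cons] at hjlen
    have hi0 : i = 0 := by
      by_contra hi
      obtain ⟨i', rfl⟩ : ∃ i', i = i' + 1 := ⟨i - 1, by omega⟩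
      obtain ⟨j', rfl⟩ : ∃ j', j = j' + 1 := ⟨j - 1, by omega⟩
      rw [List.getD_cons_succ, List.getD_cons_succ] at hdesc
      rw [List.getD_cons_succ, List.getD_cons_succ] at hviol
      have := hCt i' j' (by omega) (by omega) hdesc
      omega
    subst hi0
    have hxb : x < (x :: t).getD (j + 1) 0 := by
      rw [List.getD_cons_zero] at hviol
      have hne := nodup_getD_ne hnd (show 0 < (x :: t).length by simp)
        (show j + 1 < (x :: t).length by simp only [List.length_cons]; omega) (by omega)
      rw [List.getD_cons_zero] at hne
      omega
    rw [List.getD_cons_succ] at hxb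
    have hj1 : 1 ≤ j := by
      rcases Nat.eq_zero_or_pos j with rfl | h
      · rw [List.getD_cons_succ, List.getD_cons_zero] at hdesc
        omega
      · exact h
    have hmid : ∀ s < j, t.getD j 0 < t.getD s 0 := by
      by_contra hm
      push_neg at hm
      obtain ⟨s, hs, hsb⟩ := hm
      obtain ⟨j', rfl⟩ : ∃ j', j = j' + 1 := ⟨j - 1, by omega⟩
      rw [List.getD_cons_succ, List.getD_cons_succ] at hdesc
      have hne : t.getD s 0 ≠ t.getD (j' + 1) 0 :=
        nodup_getD_ne ((List.nodup_cons.mp hnd).2) (show s < t.length by omega)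
          (show j' + 1 < t.length by omega) (by omega)
      have := hCt s j' (by omega) (by omega) hdesc
      omega
    obtain ⟨k, hk⟩ := core132 hnd (show j < t.length by omega) hj1 rfl hxb hmid
    exact havoid k hk
/-- running minimum of a word -/
def rm (w : List ℕ) : ℕ → ℕ
  | 0 => w.getD 0 0
  | i + 1 => min (rm w i) (w.getD (i + 1) 0)

lemma rm_le (w : List ℕ) : ∀ i t, t ≤ i → rm w i ≤ w.getD t 0 := by
  intro i
  induction i with
  | zero => intro t ht; rw [Nat.le_zero.mp ht]; exact le_rfl
  | succ n ih =>
    intro t ht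
    rcases Nat.eq_or_lt_of_le ht with rfl | h
    · exact min_le_right _ _
    · exact le_trans (min_le_left _ _) (ih t (by omega))

lemma rm_mem (w : List ℕ) : ∀ i, ∃ t ≤ i, rm w i = w.getD t 0 := by
  intro i
  induction i with
  | zero => exact ⟨0, le_rfl, rfl⟩
  | succ n ih =>
    obtain ⟨t, ht, hv⟩ := ih
    rcases le_or_gt (rm w n) (w.getD (n + 1) 0) with h | h
    · exact ⟨t, by omega, by rw [rm, min_eq_left h, hv]⟩
    · exact ⟨n + 1, le_rfl, by rw [rm, min_eq_right (le_of_lt h)]⟩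

lemma rm_antitone (w : List ℕ) : ∀ {i j}, i ≤ j → rm w j ≤ rm w i := by
  intro i j h
  induction j with
  | zero => rw [Nat.le_zero.mp h]
  | succ n ih =>
    rcases Nat.eq_or_lt_of_le h with rfl | h'
    · exact le_rfl
    · exact le_trans (min_le_left _ _) (ih (by omega))

lemma rm_succ_descent {w : List ℕ} (hC : Cw w) {i : ℕ} (hi : i + 1 < w.length)
    (hd : w.getD (i + 1) 0 < w.getD i 0) :
    rm w (i + 1) = w.getD (i + 1) 0 ∧ w.getD (i + 1) 0 < rm w i := by
  obtain ⟨t, ht, hv⟩ := rm_mem w i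
  have := hC t i ht hi hd
  constructor
  · rw [rm, min_eq_right]; omega
  · omega

lemma rm_succ_ascent {w : List ℕ} {i : ℕ} (hd : w.getD i 0 < w.getD (i + 1) 0) :
    rm w (i + 1) = rm w i := by
  have := rm_le w i i le_rfl
  rw [rm, min_eq_left]; omega

/-- number of distinct running-min values -/
lemma rm_image_card {w : List ℕ} (hC : Cw w) (hnd : w.Nodup) :
    ∀ i, i < w.length →
      ((Finset.range (i + 1)).image (rm w)).card =
        1 + (List.range i).countP (fun t => decide (w.getD (t + 1) 0 < w.getD t 0)) := by
  intro i
  induction i with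
  | zero => intro _; simp
  | succ n ih =>
    intro hi
    have hn : n < w.length := by omega
    rw [Finset.range_add_one, Finset.image_insert, List.range_succ, List.countP_append]
    rcases lt_or_ge (w.getD (n + 1) 0) (w.getD n 0) with hd | hd
    · obtain ⟨hv, hlt⟩ := rm_succ_descent hC hi hd
      have hnotmem : rm w (n + 1) ∉ (Finset.range (n + 1)).image (rm w) := by
        intro hmem
        obtain ⟨t, ht, hv'⟩ := Finset.mem_image.mp hmem
        have ht' : t ≤ n := by simpa [Nat.lt_succ_iff] using Finset.mem_range.mp ht
        have := rm_antitone w ht'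
        omega
      rw [Finset.card_insert_of_notMem hnotmem, ih hn]
      have hcnt : List.countP (fun t => decide (w.getD (t + 1) 0 < w.getD t 0)) [n] = 1 := by
        simp only [List.countP_cons, List.countP_nil, decide_eq_true_eq]
        rw [if_pos hd]
      rw [hcnt]; omega
    · have hasc : w.getD n 0 < w.getD (n + 1) 0 := by
        have := nodup_getD_ne hnd hn (by omega : n + 1 < w.length) (by omega)
        omega
      have he : rm w (n + 1) = rm w n := rm_succ_ascent hasc
      have hmem : rm w (n + 1) ∈ (Finset.range (n + 1)).image (rm w) :=
        Finset.mem_image.mpr ⟨n, Finset.mem_range.mpr (by omega), he.symm⟩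
      rw [Finset.insert_eq_self.mpr hmem, ih hn]
      have hcnt : List.countP (fun t => decide (w.getD (t + 1) 0 < w.getD t 0)) [n] = 0 := by
        simp only [List.countP_cons, List.countP_nil, decide_eq_true_eq]
        rw [if_neg (by omega)]
      rw [hcnt]; omega

/-- a word listing `{1, …, n}` -/
def GoodWord (n : ℕ) (w : List ℕ) : Prop :=
  w.length = n ∧ w.Nodup ∧ ∀ x, x ∈ w ↔ x ∈ Finset.Icc 1 n

lemma permWord_goodWord {n : ℕ} (π : Equiv.Perm (Fin n)) : GoodWord n (permWord π) := by
  refine ⟨by simp [permWord], ?_, ?_⟩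
  · unfold permWord
    rw [List.nodup_ofFn]
    intro i j h
    simp only [] at h
    have : π i = π j := by
      apply Fin.ext
      omega
    exact π.injective this
  · intro x
    simp only [permWord, List.mem_ofFn, Finset.mem_Icc]
    constructor
    · rintro ⟨i, rfl⟩
      show 1 ≤ (π i : ℕ) + 1 ∧ (π i : ℕ) + 1 ≤ n
      have := (π i).isLt
      omega
    · rintro ⟨h1, h2⟩
      refine ⟨π.symm ⟨x - 1, by omega⟩, ?_⟩
      show (π (π.symm ⟨x - 1, by omega⟩) : ℕ) + 1 = x
      rw [Equiv.apply_symm_apply]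
      show x - 1 + 1 = x
      omega

/-- the running minimum before the occurrence of a value -/
noncomputable def mwv (w : List ℕ) (x : ℕ) : ℕ := rm w (w.idxOf x)

noncomputable def fibF (n : ℕ) (w : List ℕ) (x : ℕ) : Finset ℕ :=
  (Finset.Icc 1 n).filter (fun y => mwv w y = mwv w x)

lemma mem_fibF {n : ℕ} {w : List ℕ} {x y : ℕ} :
    y ∈ fibF n w x ↔ y ∈ Finset.Icc 1 n ∧ mwv w y = mwv w x := by
  simp [fibF]

/-- the partition of `{1,…,n}` into fibers of the running minimum -/
noncomputable def fibPartition (n : ℕ) (w : List ℕ) : Finpartition (Finset.Icc 1 n) where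
  parts := (Finset.Icc 1 n).image (fibF n w)
  supIndep := by
    rw [Finset.supIndep_iff_pairwiseDisjoint]
    intro s hs t ht hst
    simp only [Finset.coe_image, Set.mem_image] at hs ht
    obtain ⟨a, _, rfl⟩ := hs
    obtain ⟨b, _, rfl⟩ := ht
    rw [Function.onFun, Finset.disjoint_left]
    intro z hz1 hz2
    simp only [id_eq] at hz1 hz2
    rw [mem_fibF] at hz1 hz2
    apply hst
    have hab : mwv w a = mwv w b := by rw [← hz1.2, hz2.2]
    unfold fibF
    rw [hab]
  sup_parts := by
    apply le_antisymm
    · rw [Finset.sup_le_iff]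
      intro s hs
      simp only [Finset.mem_image] at hs
      obtain ⟨a, _, rfl⟩ := hs
      exact Finset.filter_subset _ _
    · intro x hx
      rw [Finset.mem_sup]
      exact ⟨fibF n w x, Finset.mem_image_of_mem _ hx, mem_fibF.mpr ⟨hx, rfl⟩⟩
  bot_notMem := by
    intro h
    simp only [Finset.bot_eq_empty, Finset.mem_image] at h
    obtain ⟨a, ha, he⟩ := h
    have : a ∈ fibF n w a := mem_fibF.mpr ⟨ha, rfl⟩
    rw [he] at this
    exact absurd this (Finset.notMem_empty a)

lemma fibPartition_parts_card {n : ℕ} {w : List ℕ} (hg : GoodWord n w) (hC : Cw w)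
    (hn : 1 ≤ n) :
    (fibPartition n w).parts.card = 1 + desList w := by
  obtain ⟨hlen, hnd, hmem⟩ := hg
  have himg : (fibPartition n w).parts =
      ((Finset.Icc 1 n).image (mwv w)).image
        (fun v => (Finset.Icc 1 n).filter (fun y => mwv w y = v)) := by
    show (Finset.Icc 1 n).image (fibF n w) = _
    rw [Finset.image_image]
    rfl
  rw [himg]
  rw [Finset.card_image_of_injOn]
  · -- card (image mwv) = card (image rm over range n)
    have hset : (Finset.Icc 1 n).image (mwv w) = (Finset.range ((n - 1) + 1)).image (rm w) := by
      apply Finset.ext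
      intro v
      simp only [Finset.mem_image, Finset.mem_range]
      constructor
      · rintro ⟨x, hx, rfl⟩
        have hxw : x ∈ w := (hmem x).mpr hx
        have : w.idxOf x < w.length := List.idxOf_lt_length_iff.mpr hxw
        exact ⟨w.idxOf x, by omega, rfl⟩
      · rintro ⟨i, hi, rfl⟩
        have hiw : i < w.length := by omega
        refine ⟨w[i], ?_, ?_⟩
        · exact (hmem w[i]).mp (List.getElem_mem hiw)
        · unfold mwv
          rw [List.Nodup.idxOf_getElem hnd i hiw]
      
    rw [hset, rm_image_card hC hnd (n - 1) (by omega)]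
    unfold desList
    rw [hlen]
  · -- injectivity of fibers on attained values
    intro v hv v' hv' he
    simp only [Finset.coe_image, Set.mem_image] at hv hv'
    obtain ⟨x, hx, hxv⟩ := hv
    subst hxv
    change Finset.filter (fun y => mwv w y = mwv w x) (Finset.Icc 1 n) =
      Finset.filter (fun y => mwv w y = v') (Finset.Icc 1 n) at he
    have hxm : x ∈ (Finset.Icc 1 n).filter (fun y => mwv w y = mwv w x) :=
      Finset.mem_filter.mpr ⟨by simpa using hx, rfl⟩
    rw [he] at hxm
    simp only [Finset.mem_filter] at hxm
    exact hxm.2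


lemma fibPartition_parts (n : ℕ) (w : List ℕ) :
    (fibPartition n w).parts = (Finset.Icc 1 n).image (fibF n w) := rfl
-- ============ new content ============
variable {n : ℕ}

/-- minimum of the block containing `x` -/
noncomputable def bmin (p : Finpartition (Finset.Icc 1 n)) (x : ℕ) : ℕ :=
  if h : (p.part x).Nonempty then (p.part x).min' h else 0

/-- order: by block minimum descending, then by value ascending -/
def prel (p : Finpartition (Finset.Icc 1 n)) (x y : ℕ) : Prop :=
  bmin p y < bmin p x ∨ (bmin p x = bmin p y ∧ x ≤ y)

noncomputable instance (p : Finpartition (Finset.Icc 1 n)) : DecidableRel (prel p) :=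
  fun _ _ => by unfold prel; infer_instance

instance (p : Finpartition (Finset.Icc 1 n)) : IsTrans ℕ (prel p) :=
  ⟨by intro a b c hab hbc; unfold prel at *; omega⟩

instance (p : Finpartition (Finset.Icc 1 n)) : IsAntisymm ℕ (prel p) :=
  ⟨by intro a b hab hba; unfold prel at *; omega⟩

instance (p : Finpartition (Finset.Icc 1 n)) : IsTotal ℕ (prel p) :=
  ⟨by intro a b; unfold prel; omega⟩

section bminLemmas
variable {p : Finpartition (Finset.Icc 1 n)} {x y : ℕ}

lemma part_nonempty (hx : x ∈ Finset.Icc 1 n) : (p.part x).Nonempty :=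
  ⟨x, p.mem_part hx⟩

lemma bmin_eq_min' (hx : x ∈ Finset.Icc 1 n) :
    bmin p x = (p.part x).min' (part_nonempty hx) := by
  unfold bmin
  rw [dif_pos (part_nonempty hx)]

lemma bmin_mem (hx : x ∈ Finset.Icc 1 n) : bmin p x ∈ p.part x := by
  rw [bmin_eq_min' hx]; exact Finset.min'_mem _ _

lemma bmin_le (hx : x ∈ Finset.Icc 1 n) (hy : y ∈ p.part x) : bmin p x ≤ y := by
  rw [bmin_eq_min' hx]; exact Finset.min'_le _ _ hy

lemma bmin_le_self (hx : x ∈ Finset.Icc 1 n) : bmin p x ≤ x :=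
  bmin_le hx (p.mem_part hx)

lemma part_subset (hx : x ∈ Finset.Icc 1 n) : p.part x ⊆ Finset.Icc 1 n :=
  p.le (p.part_mem.2 hx)

lemma bmin_icc (hx : x ∈ Finset.Icc 1 n) : bmin p x ∈ Finset.Icc 1 n :=
  part_subset hx (bmin_mem hx)

lemma bmin_of_mem_part (hx : x ∈ Finset.Icc 1 n) (hy : y ∈ p.part x) :
    bmin p y = bmin p x := by
  have hpart : p.part y = p.part x := p.part_eq_of_mem (p.part_mem.2 hx) hy
  unfold bmin
  rw [hpart]

lemma bmin_bmin (hx : x ∈ Finset.Icc 1 n) : bmin p (bmin p x) = bmin p x :=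
  bmin_of_mem_part hx (bmin_mem hx)

end bminLemmas

section sortedLemmas
variable {p : Finpartition (Finset.Icc 1 n)} {w : List ℕ}

/-- getD version of sortedness -/
lemma sorted_getD (hs : w.Pairwise (prel p)) {i j : ℕ} (hij : i < j) (hj : j < w.length) :
    prel p (w.getD i 0) (w.getD j 0) := by
  rw [List.getD_eq_getElem _ _ (by omega : i < w.length), List.getD_eq_getElem _ _ hj]
  exact List.pairwise_iff_get.mp hs ⟨i, by omega⟩ ⟨j, hj⟩ hij

lemma idx_lt_of_prel (hnd : w.Nodup) (hs : w.Pairwise (prel p)) {x y : ℕ}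
    (hx : x ∈ w) (hy : y ∈ w) (hxy : x ≠ y) (hr : prel p x y) :
    w.idxOf x < w.idxOf y := by
  have hxl : w.idxOf x < w.length := List.idxOf_lt_length_iff.mpr hx
  have hyl : w.idxOf y < w.length := List.idxOf_lt_length_iff.mpr hy
  have hgx : w.getD (w.idxOf x) 0 = x := by
    rw [List.getD_eq_getElem _ _ hxl]; exact List.getElem_idxOf hxl
  have hgy : w.getD (w.idxOf y) 0 = y := by
    rw [List.getD_eq_getElem _ _ hyl]; exact List.getElem_idxOf hyl
  rcases lt_trichotomy (w.idxOf x) (w.idxOf y) with h | h | h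
  · exact h
  · exact absurd (by rw [← hgx, ← hgy, h]) hxy
  · have := sorted_getD hs h hxl
    rw [hgx, hgy] at this
    exact absurd (antisymm hr this) hxy

lemma getD_mem_icc (hg : GoodWord n w) {i : ℕ} (hi : i < w.length) :
    w.getD i 0 ∈ Finset.Icc 1 n := by
  rw [List.getD_eq_getElem _ _ hi]
  exact (hg.2.2 _).mp (List.getElem_mem hi)

/-- K2 : a sorted word satisfies the descent-bottom condition -/
lemma Cw_of_sorted (hg : GoodWord n w) (hs : w.Pairwise (prel p)) : Cw w := by
  intro i j hij hj1 hd
  have hA : w.getD j 0 ∈ Finset.Icc 1 n := getD_mem_icc hg (by omega)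
  have hB : w.getD (j + 1) 0 ∈ Finset.Icc 1 n := getD_mem_icc hg hj1
  have hI : w.getD i 0 ∈ Finset.Icc 1 n := getD_mem_icc hg (by omega)
  have hAB : bmin p (w.getD (j + 1) 0) < bmin p (w.getD j 0) := by
    have h := sorted_getD hs (show j < j + 1 by omega) hj1
    unfold prel at h
    omega
  have hBmin : bmin p (w.getD (j + 1) 0) = w.getD (j + 1) 0 := by
    by_contra hne
    have hmB : bmin p (w.getD (j + 1) 0) ≤ w.getD (j + 1) 0 := bmin_le_self hB
    have hmicc : bmin p (w.getD (j + 1) 0) ∈ Finset.Icc 1 n := bmin_icc hB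
    have hmw : bmin p (w.getD (j + 1) 0) ∈ w := (hg.2.2 _).mpr hmicc
    have hmbm : bmin p (bmin p (w.getD (j + 1) 0)) = bmin p (w.getD (j + 1) 0) :=
      bmin_bmin hB
    have hprel : prel p (bmin p (w.getD (j + 1) 0)) (w.getD (j + 1) 0) :=
      Or.inr ⟨hmbm, by omega⟩
    have hBw : w.getD (j + 1) 0 ∈ w := (hg.2.2 _).mpr hB
    have hidx := idx_lt_of_prel hg.2.1 hs hmw hBw (by omega) hprel
    have hidxB : w.idxOf (w.getD (j + 1) 0) = j + 1 := by
      rw [List.getD_eq_getElem _ _ hj1]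
      exact List.Nodup.idxOf_getElem hg.2.1 _ _
    rw [hidxB] at hidx
    have htl : w.idxOf (bmin p (w.getD (j + 1) 0)) < w.length :=
      List.idxOf_lt_length_iff.mpr hmw
    have hgt : w.getD (w.idxOf (bmin p (w.getD (j + 1) 0))) 0 =
        bmin p (w.getD (j + 1) 0) := by
      rw [List.getD_eq_getElem _ _ htl]; exact List.getElem_idxOf htl
    have htj : w.idxOf (bmin p (w.getD (j + 1) 0)) ≠ j := by
      intro h
      rw [h] at hgt
      omega
    have htlt : w.idxOf (bmin p (w.getD (j + 1) 0)) < j := by omega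
    have h2 := sorted_getD hs htlt (show j < w.length by omega)
    rw [hgt] at h2
    unfold prel at h2
    omega
  rcases Nat.eq_or_lt_of_le hij with rfl | hlt
  · exact hd
  · have h1 := sorted_getD hs (show i < j + 1 by omega) hj1
    unfold prel at h1
    have h3 : bmin p (w.getD i 0) ≤ w.getD i 0 := bmin_le_self hI
    have h2 := sorted_getD hs hlt (show j < w.length by omega)
    unfold prel at h2
    omega

/-- K3 : in a sorted word, the running minimum before `x` is its block minimum -/
lemma mwv_sorted (hg : GoodWord n w) (hs : w.Pairwise (prel p)) {x : ℕ}
    (hx : x ∈ Finset.Icc 1 n) : mwv w x = bmin p x := by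
  have hxw : x ∈ w := (hg.2.2 x).mpr hx
  have hxl : w.idxOf x < w.length := List.idxOf_lt_length_iff.mpr hxw
  have hgx : w.getD (w.idxOf x) 0 = x := by
    rw [List.getD_eq_getElem _ _ hxl]; exact List.getElem_idxOf hxl
  apply le_antisymm
  · -- mwv ≤ bmin : the block min appears before x
    set m := bmin p x with hm
    rcases eq_or_ne m x with h | h
    · unfold mwv
      calc rm w (w.idxOf x) ≤ w.getD (w.idxOf x) 0 := rm_le w _ _ le_rfl
        _ = x := hgx
        _ = m := h.symm
    · have hmicc : m ∈ Finset.Icc 1 n := bmin_icc hx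
      have hmw : m ∈ w := (hg.2.2 m).mpr hmicc
      have hmbm : bmin p m = bmin p x := bmin_bmin hx
      have hple : m ≤ x := bmin_le_self hx
      have hprel : prel p m x := Or.inr ⟨by rw [hmbm], hple⟩
      have hidx : w.idxOf m < w.idxOf x := idx_lt_of_prel hg.2.1 hs hmw hxw h hprel
      have hgm : w.getD (w.idxOf m) 0 = m := by
        have hml : w.idxOf m < w.length := List.idxOf_lt_length_iff.mpr hmw
        rw [List.getD_eq_getElem _ _ hml]; exact List.getElem_idxOf hml
      unfold mwv
      calc rm w (w.idxOf x) ≤ w.getD (w.idxOf m) 0 := rm_le w _ _ (by omega)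
        _ = m := hgm
  · -- bmin ≤ mwv
    obtain ⟨t, ht, hv⟩ := rm_mem w (w.idxOf x)
    unfold mwv
    rw [hv]
    rcases Nat.eq_or_lt_of_le ht with rfl | htlt
    · rw [hgx]; exact bmin_le_self hx
    · have htl : t < w.length := by omega
      have hticc : w.getD t 0 ∈ Finset.Icc 1 n := getD_mem_icc hg htl
      have := sorted_getD hs htlt hxl
      rw [hgx] at this
      unfold prel at this
      have h1 : bmin p (w.getD t 0) ≤ w.getD t 0 := bmin_le_self hticc
      omega

/-- K4 : the fiber partition of the sorted word is the original partition -/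
lemma fibPartition_sorted (hg : GoodWord n w) (hs : w.Pairwise (prel p)) :
    fibPartition n w = p := by
  apply Finpartition.ext
  rw [fibPartition_parts]
  have hfib : ∀ x ∈ Finset.Icc 1 n, fibF n w x = p.part x := by
    intro x hx
    apply Finset.ext
    intro y
    rw [mem_fibF]
    constructor
    · rintro ⟨hy, hmwv⟩
      rw [mwv_sorted hg hs hy, mwv_sorted hg hs hx] at hmwv
      have h1 : bmin p y ∈ p.part y := bmin_mem hy
      have h2 : bmin p x ∈ p.part x := bmin_mem hx
      rw [hmwv] at h1
      have : p.part y = p.part x :=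
        p.eq_of_mem_parts (p.part_mem.2 hy) (p.part_mem.2 hx) h1 h2
      rw [← this]
      exact p.mem_part hy
    · intro hy
      have hyicc : y ∈ Finset.Icc 1 n := part_subset hx hy
      refine ⟨hyicc, ?_⟩
      rw [mwv_sorted hg hs hyicc, mwv_sorted hg hs hx]
      exact bmin_of_mem_part hx hy
  apply Finset.ext
  intro t
  simp only [Finset.mem_image]
  constructor
  · rintro ⟨x, hx, rfl⟩
    rw [hfib x hx]
    exact p.part_mem.2 hx
  · intro ht
    obtain ⟨x, hxt⟩ := p.nonempty_of_mem_parts ht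
    have hx : x ∈ Finset.Icc 1 n := p.le ht hxt
    exact ⟨x, hx, by rw [hfib x hx]; exact p.part_eq_of_mem ht hxt⟩

end sortedLemmas

section cwWordLemmas
variable {w : List ℕ}

/-- within a constant stretch of the running minimum, the word increases -/
lemma getD_le_of_rm_eq (hC : Cw w) (hnd : w.Nodup) :
    ∀ i j, i ≤ j → j < w.length → rm w i = rm w j → w.getD i 0 ≤ w.getD j 0 := by
  intro i j hij
  induction j, hij using Nat.le_induction with
  | base => intro _ _; exact le_rfl
  | succ j hj ih =>
    intro hjl hrm
    rcases lt_or_ge (w.getD (j + 1) 0) (w.getD j 0) with hd | hd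
    · obtain ⟨hv, hlt⟩ := rm_succ_descent hC hjl hd
      have h1 : rm w j ≤ rm w i := rm_antitone w hj
      have h2 : rm w (j + 1) ≤ rm w j := rm_antitone w (by omega)
      omega
    · have hne : w.getD j 0 ≠ w.getD (j + 1) 0 :=
        nodup_getD_ne hnd (by omega) hjl (by omega)
      have hasc : w.getD j 0 < w.getD (j + 1) 0 := by omega
      have he : rm w (j + 1) = rm w j := rm_succ_ascent hasc
      have := ih (by omega) (by rw [hrm, he])
      omega

/-- K5a : the block minimum in the fiber partition is the running minimum -/
lemma bmin_fibPartition (hg : GoodWord n w) {x : ℕ} (hx : x ∈ Finset.Icc 1 n) :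
    bmin (fibPartition n w) x = mwv w x := by
  have hxw : x ∈ w := (hg.2.2 x).mpr hx
  have hxl : w.idxOf x < w.length := List.idxOf_lt_length_iff.mpr hxw
  have hpart : (fibPartition n w).part x = fibF n w x := by
    apply (fibPartition n w).part_eq_of_mem
    · rw [fibPartition_parts]
      exact Finset.mem_image_of_mem _ hx
    · exact mem_fibF.mpr ⟨hx, rfl⟩
  -- mwv w x belongs to the fiber
  obtain ⟨t, ht, hv⟩ := rm_mem w (w.idxOf x)
  have htl : t < w.length := by omega
  have hticc : w.getD t 0 ∈ Finset.Icc 1 n := getD_mem_icc hg htl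
  have hidxt : w.idxOf (w.getD t 0) = t := by
    rw [List.getD_eq_getElem _ _ htl]
    exact List.Nodup.idxOf_getElem hg.2.1 _ _
  have hmwvt : mwv w (w.getD t 0) = mwv w x := by
    unfold mwv
    rw [hidxt]
    apply le_antisymm
    · calc rm w t ≤ w.getD t 0 := rm_le w t t le_rfl
        _ = rm w (w.idxOf x) := hv.symm
    · rw [hv.symm] at *
      exact rm_antitone w ht
  have hmem : mwv w x ∈ fibF n w x := by
    rw [show mwv w x = w.getD t 0 from hv]
    exact mem_fibF.mpr ⟨hticc, hmwvt⟩
  have hne : (fibF n w x).Nonempty := ⟨_, hmem⟩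
  unfold bmin
  rw [hpart, dif_pos hne]
  apply le_antisymm
  · exact Finset.min'_le _ _ hmem
  · apply Finset.le_min'
    intro y hy
    rw [mem_fibF] at hy
    have hyw : y ∈ w := (hg.2.2 y).mpr hy.1
    have hyl : w.idxOf y < w.length := List.idxOf_lt_length_iff.mpr hyw
    have hgy : w.getD (w.idxOf y) 0 = y := by
      rw [List.getD_eq_getElem _ _ hyl]; exact List.getElem_idxOf hyl
    calc mwv w x = mwv w y := hy.2.symm
      _ ≤ w.getD (w.idxOf y) 0 := rm_le w _ _ le_rfl
      _ = y := hgy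

/-- K5b : a word satisfying `Cw` is sorted for the fiber-partition order -/
lemma sorted_of_Cw (hg : GoodWord n w) (hC : Cw w) :
    w.Pairwise (prel (fibPartition n w)) := by
  rw [List.pairwise_iff_get]
  intro i j hij
  have hil : (i : ℕ) < w.length := i.isLt
  have hjl : (j : ℕ) < w.length := j.isLt
  have hgi : w.get i = w.getD i 0 := (List.getD_eq_getElem _ _ hil).symm
  have hgj : w.get j = w.getD j 0 := (List.getD_eq_getElem _ _ hjl).symm
  rw [hgi, hgj]
  have hiicc : w.getD i 0 ∈ Finset.Icc 1 n := getD_mem_icc hg hil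
  have hjicc : w.getD j 0 ∈ Finset.Icc 1 n := getD_mem_icc hg hjl
  have hidxi : w.idxOf (w.getD i 0) = i := by
    rw [List.getD_eq_getElem _ _ hil]; exact List.Nodup.idxOf_getElem hg.2.1 _ _
  have hidxj : w.idxOf (w.getD j 0) = j := by
    rw [List.getD_eq_getElem _ _ hjl]; exact List.Nodup.idxOf_getElem hg.2.1 _ _
  have hbi : bmin (fibPartition n w) (w.getD i 0) = rm w i := by
    rw [bmin_fibPartition hg hiicc]; unfold mwv; rw [hidxi]
  have hbj : bmin (fibPartition n w) (w.getD j 0) = rm w j := by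
    rw [bmin_fibPartition hg hjicc]; unfold mwv; rw [hidxj]
  have hmono : rm w j ≤ rm w i := rm_antitone w (le_of_lt hij)
  rcases Nat.eq_or_lt_of_le hmono with heq | hlt
  · right
    refine ⟨by rw [hbi, hbj, heq], ?_⟩
    exact getD_le_of_rm_eq hC hg.2.1 i j (le_of_lt hij) hjl heq.symm
  · left
    rw [hbi, hbj]
    exact hlt

/-- K5 : sorting recovers a `Cw` word -/
lemma sort_fibPartition (hg : GoodWord n w) (hC : Cw w) :
    (Finset.Icc 1 n).sort (prel (fibPartition n w)) = w := by
  apply fun hp h1 h2 => List.Perm.eq_of_pairwise' (r := prel (fibPartition n w)) h1 h2 hp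
  · apply List.perm_of_nodup_nodup_toFinset_eq (Finset.sort_nodup _ _) hg.2.1
    apply Finset.ext
    intro x
    rw [List.mem_toFinset, List.mem_toFinset, Finset.mem_sort]
    exact (hg.2.2 x).symm
  · exact Finset.pairwise_sort _ _
  · exact sorted_of_Cw hg hC

/-- the sorted word of any partition is a good word -/
lemma goodWord_sort (p : Finpartition (Finset.Icc 1 n)) :
    GoodWord n ((Finset.Icc 1 n).sort (prel p)) := by
  refine ⟨?_, Finset.sort_nodup _ _, ?_⟩
  · rw [Finset.length_sort, Nat.card_Icc]
    omega
  · intro x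
    rw [Finset.mem_sort]

end cwWordLemmas
-- ===== new content =====
variable {n : ℕ}

noncomputable def wordPerm (w : List ℕ) (h : GoodWord n w) : Equiv.Perm (Fin n) :=
  Equiv.ofBijective
    (fun i => (⟨w.getD i.1 0 - 1, by
      have hi : (i : ℕ) < w.length := by rw [h.1]; exact i.isLt
      have hm := (h.2.2 (w.getD i 0)).mp
        (by rw [List.getD_eq_getElem _ _ hi]; exact List.getElem_mem hi)
      rw [Finset.mem_Icc] at hm
      omega⟩ : Fin n))
    (by
      rw [← Finite.injective_iff_bijective]
      intro i j hij
      by_contra hne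
      have hi : (i : ℕ) < w.length := by rw [h.1]; exact i.isLt
      have hj : (j : ℕ) < w.length := by rw [h.1]; exact j.isLt
      have h1 := (h.2.2 (w.getD i 0)).mp
        (by rw [List.getD_eq_getElem _ _ hi]; exact List.getElem_mem hi)
      have h2 := (h.2.2 (w.getD j 0)).mp
        (by rw [List.getD_eq_getElem _ _ hj]; exact List.getElem_mem hj)
      rw [Finset.mem_Icc] at h1 h2
      have hne' : w.getD i 0 ≠ w.getD j 0 :=
        nodup_getD_ne h.2.1 hi hj (fun hc => hne (Fin.ext hc))
      have := Fin.mk.injEq (w.getD i.1 0 - 1) _ (w.getD j.1 0 - 1) _ ▸ hij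
      simp only [Fin.mk.injEq] at hij
      omega)

lemma permWord_wordPerm (w : List ℕ) (h : GoodWord n w) :
    permWord (wordPerm w h) = w := by
  apply List.ext_getElem
  · simp [permWord, h.1]
  · intro i h1 h2
    have hi : i < n := by simpa [permWord] using h1
    have hiw : i < w.length := by rw [h.1]; exact hi
    have hm := (h.2.2 (w.getD i 0)).mp
      (by rw [List.getD_eq_getElem _ _ hiw]; exact List.getElem_mem hiw)
    rw [Finset.mem_Icc] at hm
    show (List.ofFn fun j => ((wordPerm w h) j : ℕ) + 1)[i]'(by simpa using hi) = w[i]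
    rw [List.getElem_ofFn]
    show (w.getD (⟨i, by simpa [permWord] using h1⟩ : Fin n).1 0 - 1) + 1 = w[i]
    simp only []
    rw [List.getD_eq_getElem _ _ hiw]
    rw [List.getD_eq_getElem _ _ hiw] at hm
    omega

lemma permWord_inj {π π' : Equiv.Perm (Fin n)} (h : permWord π = permWord π') :
    π = π' := by
  unfold permWord at h
  rw [List.ofFn_inj] at h
  apply Equiv.ext
  intro i
  have := congrFun h i
  exact Fin.ext (by omega)


end Stmt12

open Stmt12

/-- for `n ≥ 1` and `k ≥ 1`, the number of `π ∈ SP_n(132)` with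
exactly `k-1` descents equals the Stirling number of the second kind, i.e. the
number of set partitions of `[n]` into exactly `k` blocks. -/
theorem stmt12 (n k : ℕ) (hn : 1 ≤ n) (hk : 1 ≤ k) :
    {π : Equiv.Perm (Fin n) | AvoidsSP [1, 3, 2] π ∧ desList (permWord π) = k - 1}.ncard =
    {p : Finpartition (Finset.Icc 1 n) | p.parts.card = k}.ncard := by
  set S := {π : Equiv.Perm (Fin n) | AvoidsSP [1, 3, 2] π ∧ desList (permWord π) = k - 1}
    with hS
  set T := {p : Finpartition (Finset.Icc 1 n) | p.parts.card = k} with hT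
  set f : Equiv.Perm (Fin n) → Finpartition (Finset.Icc 1 n) :=
    fun π => fibPartition n (permWord π) with hf
  have hSC : ∀ π ∈ S, Cw (permWord π) := by
    intro π hπ
    exact Cw_of_avoid _ (permWord_goodWord π).2.1 hπ.1
  have himg : f '' S = T := by
    ext p
    constructor
    · rintro ⟨π, hπ, rfl⟩
      show (fibPartition n (permWord π)).parts.card = k
      rw [fibPartition_parts_card (permWord_goodWord π) (hSC π hπ) hn, hπ.2]
      omega
    · intro hp
      have hg := goodWord_sort p
      have hsrt := Finset.pairwise_sort (Finset.Icc 1 n) (prel p)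
      have hC : Cw ((Finset.Icc 1 n).sort (prel p)) := Cw_of_sorted hg hsrt
      have hfib : fibPartition n ((Finset.Icc 1 n).sort (prel p)) = p :=
        fibPartition_sorted hg hsrt
      have hpw : permWord (wordPerm _ hg) = (Finset.Icc 1 n).sort (prel p) :=
        permWord_wordPerm _ hg
      have hcard : (fibPartition n ((Finset.Icc 1 n).sort (prel p))).parts.card =
          1 + desList ((Finset.Icc 1 n).sort (prel p)) :=
        fibPartition_parts_card hg hC hn
      rw [hfib] at hcard
      have hpk : p.parts.card = k := hp
      refine ⟨wordPerm _ hg, ⟨?_, ?_⟩, ?_⟩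
      · intro k'
        rw [hpw]
        exact avoid_of_Cw hC k'
      · rw [hpw]
        omega
      · show fibPartition n (permWord (wordPerm _ hg)) = p
        rw [hpw, hfib]
  have hinj : Set.InjOn f S := by
    intro π hπ π' hπ' he
    have h1 : (Finset.Icc 1 n).sort (prel (f π)) = permWord π :=
      sort_fibPartition (permWord_goodWord π) (hSC π hπ)
    have h2 : (Finset.Icc 1 n).sort (prel (f π')) = permWord π' :=
      sort_fibPartition (permWord_goodWord π') (hSC π' hπ')
    rw [he] at h1
    exact permWord_inj (h1.symm.trans h2)
  calc S.ncard = (f '' S).ncard := (Set.ncard_image_of_injOn hinj).symm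
    _ = T.ncard := by rw [himg]
end
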